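/- arXiv:2209.05181 — 9 statements merged into one kernel-verified Lean document; each statement's English description precedes it below -/
import Mathlib

section
/- Let A₁A₂A₃ be a triangle in the plane and A₀ an interior point. If weights b₁, b₂, b₃ are defined by bᵢ = C / (1 + sin(α_{i0j})/sin(α_{j0k}) + sin(α_{i0k})/sin(α_{j0k})) for {i,j,k} = {1,2,3}, where α_{i0j} denotes the angle ∠AᵢA₀Aⱼ, then b₁·u(A₀,A₁) + b₂·u(A₀,A₂) + b₃·u(A₀,A₃) = 0, where u(A₀,Aᵢ) is the unit vector from A₀ toward Aᵢ. In particular A₀ is the minimizer of x ↦ b₁|xA₁| + b₂|xA₂| + b₃|xA₃|. -/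
open scoped RealInnerProductSpace
noncomputable section IWF



def dd (v w : EuclideanSpace ℝ (Fin 2)) : ℝ := v 0 * w 1 - v 1 * w 0

lemma inner2 (v w : EuclideanSpace ℝ (Fin 2)) : ⟪v, w⟫ = v 0 * w 0 + v 1 * w 1 := by
  rw [PiLp.inner_apply]
  simp [Fin.sum_univ_two, RCLike.inner_apply]
  ring

def perp (v : EuclideanSpace ℝ (Fin 2)) : EuclideanSpace ℝ (Fin 2) :=
  (WithLp.equiv 2 (Fin 2 → ℝ)).symm ![-(v 1), v 0]

lemma perp0 (v : EuclideanSpace ℝ (Fin 2)) : perp v 0 = -(v 1) := rfl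
lemma perp1 (v : EuclideanSpace ℝ (Fin 2)) : perp v 1 = v 0 := rfl

lemma eq_zero_iff (v : EuclideanSpace ℝ (Fin 2)) : v = 0 ↔ v 0 = 0 ∧ v 1 = 0 := by
  constructor
  · rintro rfl; simp
  · rintro ⟨h0, h1⟩
    ext i
    fin_cases i <;> simpa

lemma perp_ne_zero {v : EuclideanSpace ℝ (Fin 2)} (hv : v ≠ 0) : perp v ≠ 0 := by
  intro h
  rw [eq_zero_iff] at h
  exact hv (by rw [eq_zero_iff]; exact ⟨h.2, by simpa [perp0] using h.1⟩)

lemma inner_perp (v w : EuclideanSpace ℝ (Fin 2)) : ⟪perp v, w⟫ = dd v w := by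
  rw [inner2, perp0, perp1, dd]; ring

lemma inner_perp_self (v : EuclideanSpace ℝ (Fin 2)) : ⟪perp v, v⟫ = 0 := by
  rw [inner_perp, dd]; ring





lemma star_lt {s : Set (EuclideanSpace ℝ (Fin 2))} {x : EuclideanSpace ℝ (Fin 2)}
    (hx : x ∈ interior (convexHull ℝ s))
    {w : EuclideanSpace ℝ (Fin 2)} (hw : w ≠ 0) {t : ℝ}
    (hs : ∀ y ∈ s, ⟪w, y⟫ ≤ t) : ⟪w, x⟫ < t := by
  have hlin : IsLinearMap ℝ (fun y : EuclideanSpace ℝ (Fin 2) => ⟪w, y⟫) :=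
    ⟨fun a b => inner_add_right _ _ _, fun c a => real_inner_smul_right _ _ _⟩
  have hsub : convexHull ℝ s ⊆ {y : EuclideanSpace ℝ (Fin 2) | ⟪w, y⟫ ≤ t} :=
    convexHull_min hs (convex_halfSpace_le hlin t)
  have hxint : x ∈ interior {y : EuclideanSpace ℝ (Fin 2) | ⟪w, y⟫ ≤ t} :=
    interior_mono hsub hx
  obtain ⟨ε, hε, hball⟩ := Metric.mem_nhds_iff.1 (mem_interior_iff_mem_nhds.1 hxint)
  have hle : x ∈ {y : EuclideanSpace ℝ (Fin 2) | ⟪w, y⟫ ≤ t} := interior_subset hxint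
  have hle : ⟪w, x⟫ ≤ t := hle
  rcases lt_or_eq_of_le hle with h | h
  · exact h
  · exfalso
    have hwpos : 0 < ‖w‖ := norm_pos_iff.2 hw
    set c : ℝ := ε / (2 * ‖w‖) with hc
    have hcpos : 0 < c := by positivity
    have hmem : x + c • w ∈ Metric.ball x ε := by
      rw [Metric.mem_ball, dist_eq_norm, add_sub_cancel_left, norm_smul,
        Real.norm_eq_abs, abs_of_pos hcpos]
      have : c * ‖w‖ = ε / 2 := by
        rw [hc, div_mul_eq_mul_div, div_eq_div_iff (by positivity) (by norm_num)]; ring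
      rw [this]; linarith
    have h2 : ⟪w, x + c • w⟫ ≤ t := hball hmem
    rw [inner_add_right, real_inner_smul_right, real_inner_self_eq_norm_mul_norm] at h2
    nlinarith [mul_pos hcpos (mul_pos hwpos hwpos)]

lemma star_lt' (p q r x : EuclideanSpace ℝ (Fin 2))
    (hx : x ∈ interior (convexHull ℝ ({p, q, r} : Set (EuclideanSpace ℝ (Fin 2)))))
    (w : EuclideanSpace ℝ (Fin 2)) (hw : w ≠ 0)
    (h1 : ⟪w, p - x⟫ ≤ 0) (h2 : ⟪w, q - x⟫ ≤ 0) (h3 : ⟪w, r - x⟫ ≤ 0) : False := by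
  have key : ∀ y ∈ ({p, q, r} : Set (EuclideanSpace ℝ (Fin 2))), ⟪w, y⟫ ≤ ⟪w, x⟫ := by
    intro y hy
    have expand : ∀ z : EuclideanSpace ℝ (Fin 2), ⟪w, z⟫ = ⟪w, x⟫ + ⟪w, z - x⟫ := by
      intro z; rw [← inner_add_right]; congr 1; abel
    simp only [Set.mem_insert_iff, Set.mem_singleton_iff] at hy
    rcases hy with rfl | rfl | rfl <;> rw [expand y] <;> linarith
  exact lt_irrefl _ (star_lt hx hw key)



lemma exists_dual (a b : EuclideanSpace ℝ (Fin 2)) :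
    ∃ w : EuclideanSpace ℝ (Fin 2), w ≠ 0 ∧ ⟪w, a⟫ ≤ 0 ∧ ⟪w, b⟫ ≤ 0 := by
  by_cases ha : a = 0
  · by_cases hb : b = 0
    · refine ⟨(WithLp.equiv 2 (Fin 2 → ℝ)).symm ![1, 0], ?_, by simp [ha], by simp [hb]⟩
      intro h
      have h0 : ((WithLp.equiv 2 (Fin 2 → ℝ)).symm ![1, 0] : EuclideanSpace ℝ (Fin 2)) 0 = 1 := rfl
      rw [h] at h0
      simpa using h0
    · refine ⟨-b, neg_ne_zero.2 hb, by simp [ha], ?_⟩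
      rw [inner_neg_left]
      have := real_inner_self_nonneg (x := b)
      linarith
  · by_cases h : ⟪perp a, b⟫ ≤ 0
    · exact ⟨perp a, perp_ne_zero ha, le_of_eq (inner_perp_self a), h⟩
    · refine ⟨-perp a, neg_ne_zero.2 (perp_ne_zero ha), ?_, ?_⟩
      · rw [inner_neg_left, inner_perp_self, neg_zero]
      · rw [inner_neg_left]; linarith

lemma not_vertex (p q r x : EuclideanSpace ℝ (Fin 2))
    (hx : x ∈ interior (convexHull ℝ ({p, q, r} : Set (EuclideanSpace ℝ (Fin 2))))) :
    x ≠ p := by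
  intro hxp
  obtain ⟨w, hw, hq, hr⟩ := exists_dual (q - p) (r - p)
  refine star_lt' p q r x hx w hw ?_ ?_ ?_
  · rw [hxp]; simp
  · rw [hxp]; exact hq
  · rw [hxp]; exact hr

lemma no_seg (p q r x : EuclideanSpace ℝ (Fin 2))
    (hx : x ∈ interior (convexHull ℝ ({p, q, r} : Set (EuclideanSpace ℝ (Fin 2)))))
    (hq : q - x ≠ 0) {μ ν : ℝ} (hμ : 0 < μ) (hν : 0 < ν)
    (h : μ • (q - x) + ν • (r - x) = 0) : False := by
  have hr0 : ⟪perp (q - x), r - x⟫ = 0 := by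
    have h' := congrArg (fun z => ⟪perp (q - x), z⟫) h
    simp only [inner_add_right, real_inner_smul_right, inner_perp_self, mul_zero, zero_add,
      inner_zero_right] at h'
    rcases mul_eq_zero.1 h' with h'' | h''
    · exact absurd h'' (ne_of_gt hν)
    · exact h''
  by_cases hsgn : ⟪perp (q - x), p - x⟫ ≤ 0
  · exact star_lt' p q r x hx _ (perp_ne_zero hq) hsgn (le_of_eq (inner_perp_self _))
      (le_of_eq hr0)
  · refine star_lt' p q r x hx (-(perp (q - x))) (neg_ne_zero.2 (perp_ne_zero hq)) ?_ ?_ ?_ <;>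
      rw [inner_neg_left]
    · linarith
    · rw [inner_perp_self, neg_zero]
    · rw [hr0, neg_zero]

lemma sin_eq (v w : EuclideanSpace ℝ (Fin 2)) (hv : v ≠ 0) (hw : w ≠ 0) :
    Real.sin (InnerProductGeometry.angle v w) = |dd v w| / (‖v‖ * ‖w‖) := by
  have h := InnerProductGeometry.sin_angle_mul_norm_mul_norm v w
  have h2 : ⟪v, v⟫ * ⟪w, w⟫ - ⟪v, w⟫ * ⟪v, w⟫ = (dd v w) ^ 2 := by
    simp only [inner2, dd]; ring
  rw [h2, Real.sqrt_sq_eq_abs] at h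
  have hv' : 0 < ‖v‖ := norm_pos_iff.2 hv
  have hw' : 0 < ‖w‖ := norm_pos_iff.2 hw
  rw [eq_div_iff (by positivity)]
  exact h

lemma subgrad (A p x : EuclideanSpace ℝ (Fin 2)) (hA : A - p ≠ 0) :
    dist p A ≤ dist x A + ⟪‖A - p‖⁻¹ • (A - p), x - p⟫ := by
  have hr : 0 < ‖A - p‖ := norm_pos_iff.2 hA
  have hxA : dist x A = ‖x - A‖ := dist_eq_norm _ _
  have hpA : dist p A = ‖A - p‖ := by rw [dist_eq_norm, norm_sub_rev]
  have hsplit : x - p = (x - A) + (A - p) := by abel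
  have hi : ⟪‖A - p‖⁻¹ • (A - p), x - p⟫
      = ‖A - p‖⁻¹ * (⟪A - p, x - A⟫ + ‖A - p‖ ^ 2) := by
    rw [real_inner_smul_left, hsplit, inner_add_right, real_inner_self_eq_norm_sq]
  have hb : -(‖A - p‖ * ‖x - A‖) ≤ ⟪A - p, x - A⟫ := by
    have h1 := abs_real_inner_le_norm (A - p) (x - A)
    have h2 := neg_abs_le (⟪A - p, x - A⟫)
    linarith
  rw [hxA, hpA, hi]
  have h3 : ‖A - p‖⁻¹ * (-(‖A - p‖ * ‖x - A‖) + ‖A - p‖ ^ 2)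
      ≤ ‖A - p‖⁻¹ * (⟪A - p, x - A⟫ + ‖A - p‖ ^ 2) :=
    mul_le_mul_of_nonneg_left (by linarith) (inv_pos.2 hr).le
  have h4 : ‖A - p‖⁻¹ * (-(‖A - p‖ * ‖x - A‖) + ‖A - p‖ ^ 2) = ‖A - p‖ - ‖x - A‖ := by
    field_simp
    ring
  linarith


lemma w1 (Cc r1 r2 r3 D12 D13 D23 S : ℝ) (h1 : 0 < r1) (h2 : 0 < r2) (h3 : 0 < r3)
    (hd12 : 0 < D12) (hd13 : 0 < D13) (hd23 : 0 < D23)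
    (hS : S = D12 / (r1 * r2) + D13 / (r1 * r3) + D23 / (r2 * r3)) :
    Cc / (1 + D12 / (r1 * r2) / (D23 / (r2 * r3)) + D13 / (r1 * r3) / (D23 / (r2 * r3)))
      = Cc * (D23 / (r2 * r3)) / S := by
  have hX : 0 < D12 / (r1 * r2) / (D23 / (r2 * r3)) :=
    div_pos (div_pos hd12 (mul_pos h1 h2)) (div_pos hd23 (mul_pos h2 h3))
  have hY : 0 < D13 / (r1 * r3) / (D23 / (r2 * r3)) :=
    div_pos (div_pos hd13 (mul_pos h1 h3)) (div_pos hd23 (mul_pos h2 h3))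
  have hSpos : 0 < S := by
    subst hS
    have := div_pos (div_pos hd12 (mul_pos h1 h2)) (mul_pos h2 h3)
    have := div_pos hd12 (mul_pos h1 h2)
    have := div_pos hd13 (mul_pos h1 h3)
    have := div_pos hd23 (mul_pos h2 h3)
    linarith
  rw [div_eq_div_iff (by linarith) (ne_of_gt hSpos)]
  subst hS
  field_simp
  ring

lemma w2 (Cc r1 r2 r3 D12 D13 D23 S : ℝ) (h1 : 0 < r1) (h2 : 0 < r2) (h3 : 0 < r3)
    (hd12 : 0 < D12) (hd13 : 0 < D13) (hd23 : 0 < D23)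
    (hS : S = D12 / (r1 * r2) + D13 / (r1 * r3) + D23 / (r2 * r3)) :
    Cc / (1 + D12 / (r2 * r1) / (D13 / (r1 * r3)) + D23 / (r2 * r3) / (D13 / (r1 * r3)))
      = Cc * (D13 / (r1 * r3)) / S := by
  have hX : 0 < D12 / (r2 * r1) / (D13 / (r1 * r3)) :=
    div_pos (div_pos hd12 (mul_pos h2 h1)) (div_pos hd13 (mul_pos h1 h3))
  have hY : 0 < D23 / (r2 * r3) / (D13 / (r1 * r3)) :=
    div_pos (div_pos hd23 (mul_pos h2 h3)) (div_pos hd13 (mul_pos h1 h3))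
  have hSpos : 0 < S := by
    subst hS
    have := div_pos hd12 (mul_pos h1 h2)
    have := div_pos hd13 (mul_pos h1 h3)
    have := div_pos hd23 (mul_pos h2 h3)
    linarith
  rw [div_eq_div_iff (by linarith) (ne_of_gt hSpos)]
  subst hS
  field_simp
  ring

lemma w3 (Cc r1 r2 r3 D12 D13 D23 S : ℝ) (h1 : 0 < r1) (h2 : 0 < r2) (h3 : 0 < r3)
    (hd12 : 0 < D12) (hd13 : 0 < D13) (hd23 : 0 < D23)
    (hS : S = D12 / (r1 * r2) + D13 / (r1 * r3) + D23 / (r2 * r3)) :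
    Cc / (1 + D13 / (r3 * r1) / (D12 / (r1 * r2)) + D23 / (r3 * r2) / (D12 / (r1 * r2)))
      = Cc * (D12 / (r1 * r2)) / S := by
  have hX : 0 < D13 / (r3 * r1) / (D12 / (r1 * r2)) :=
    div_pos (div_pos hd13 (mul_pos h3 h1)) (div_pos hd12 (mul_pos h1 h2))
  have hY : 0 < D23 / (r3 * r2) / (D12 / (r1 * r2)) :=
    div_pos (div_pos hd23 (mul_pos h3 h2)) (div_pos hd12 (mul_pos h1 h2))
  have hSpos : 0 < S := by
    subst hS
    have := div_pos hd12 (mul_pos h1 h2)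
    have := div_pos hd13 (mul_pos h1 h3)
    have := div_pos hd23 (mul_pos h2 h3)
    linarith
  rw [div_eq_div_iff (by linarith) (ne_of_gt hSpos)]
  subst hS
  field_simp

lemma cc1 (Cc r1 r2 r3 D23 S l1 : ℝ) (h1 : 0 < r1) (h2 : 0 < r2) (h3 : 0 < r3)
    (hS : 0 < S) (hl : 0 < l1) :
    Cc * (D23 / (r2 * r3)) / S * r1⁻¹ = Cc * D23 / (S * r1 * r2 * r3 * l1) * l1 := by
  field_simp

lemma cc2 (Cc r1 r2 r3 D13 D23 S l1 : ℝ) (h1 : 0 < r1) (h2 : 0 < r2) (h3 : 0 < r3)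
    (hS : 0 < S) (hl : 0 < l1) (hd23 : 0 < D23) :
    Cc * (D13 / (r1 * r3)) / S * r2⁻¹ = Cc * D23 / (S * r1 * r2 * r3 * l1) * (l1 * D13 / D23) := by
  field_simp

lemma cc3 (Cc r1 r2 r3 D12 D23 S l1 : ℝ) (h1 : 0 < r1) (h2 : 0 < r2) (h3 : 0 < r3)
    (hS : 0 < S) (hl : 0 < l1) (hd23 : 0 < D23) :
    Cc * (D12 / (r1 * r2)) / S * r3⁻¹ = Cc * D23 / (S * r1 * r2 * r3 * l1) * (l1 * D12 / D23) := by
  field_simp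

end IWF

open EuclideanGeometry

/-- Gueron–Tessler: solution of the inverse weighted Fermat problem for a
triangle in the plane. -/
theorem inverse_weighted_fermat_triangle
    (A₁ A₂ A₃ A₀ : EuclideanSpace ℝ (Fin 2)) (C : ℝ) (hC : 0 < C)
    (hint : A₀ ∈ interior (convexHull ℝ ({A₁, A₂, A₃} : Set (EuclideanSpace ℝ (Fin 2)))))
    (b₁ b₂ b₃ : ℝ)
    (hb₁ : b₁ = C / (1 + Real.sin (∠ A₁ A₀ A₂) / Real.sin (∠ A₂ A₀ A₃)
        + Real.sin (∠ A₁ A₀ A₃) / Real.sin (∠ A₂ A₀ A₃)))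
    (hb₂ : b₂ = C / (1 + Real.sin (∠ A₂ A₀ A₁) / Real.sin (∠ A₁ A₀ A₃)
        + Real.sin (∠ A₂ A₀ A₃) / Real.sin (∠ A₁ A₀ A₃)))
    (hb₃ : b₃ = C / (1 + Real.sin (∠ A₃ A₀ A₁) / Real.sin (∠ A₁ A₀ A₂)
        + Real.sin (∠ A₃ A₀ A₂) / Real.sin (∠ A₁ A₀ A₂))) :
    b₁ • (‖A₁ - A₀‖⁻¹ • (A₁ - A₀)) + b₂ • (‖A₂ - A₀‖⁻¹ • (A₂ - A₀))
      + b₃ • (‖A₃ - A₀‖⁻¹ • (A₃ - A₀)) = 0 ∧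
    ∀ x : EuclideanSpace ℝ (Fin 2),
      b₁ * dist A₀ A₁ + b₂ * dist A₀ A₂ + b₃ * dist A₀ A₃ ≤
        b₁ * dist x A₁ + b₂ * dist x A₂ + b₃ * dist x A₃ := by
  classical
  set v₁ : EuclideanSpace ℝ (Fin 2) := A₁ - A₀ with hv₁def
  set v₂ : EuclideanSpace ℝ (Fin 2) := A₂ - A₀ with hv₂def
  set v₃ : EuclideanSpace ℝ (Fin 2) := A₃ - A₀ with hv₃def
  -- permuted interior hypotheses
  have hint2 : A₀ ∈ interior (convexHull ℝ ({A₂, A₁, A₃} : Set (EuclideanSpace ℝ (Fin 2)))) := by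
    rwa [Set.insert_comm] at hint
  have hint3 : A₀ ∈ interior (convexHull ℝ ({A₃, A₁, A₂} : Set (EuclideanSpace ℝ (Fin 2)))) := by
    have he : ({A₁, A₂, A₃} : Set (EuclideanSpace ℝ (Fin 2))) = {A₃, A₁, A₂} := by
      ext y; simp only [Set.mem_insert_iff, Set.mem_singleton_iff]; tauto
    rwa [he] at hint
  -- the vertices differ from A₀
  have hv₁ : v₁ ≠ 0 := by
    rw [hv₁def]; exact sub_ne_zero_of_ne (Ne.symm (not_vertex _ _ _ _ hint))
  have hv₂ : v₂ ≠ 0 := by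
    rw [hv₂def]; exact sub_ne_zero_of_ne (Ne.symm (not_vertex _ _ _ _ hint2))
  have hv₃ : v₃ ≠ 0 := by
    rw [hv₃def]; exact sub_ne_zero_of_ne (Ne.symm (not_vertex _ _ _ _ hint3))
  have hr₁ : (0:ℝ) < ‖v₁‖ := norm_pos_iff.2 hv₁
  have hr₂ : (0:ℝ) < ‖v₂‖ := norm_pos_iff.2 hv₂
  have hr₃ : (0:ℝ) < ‖v₃‖ := norm_pos_iff.2 hv₃
  -- barycentric coordinates
  have h0 : A₀ ∈ convexHull ℝ ({A₁, A₂, A₃} : Set (EuclideanSpace ℝ (Fin 2))) :=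
    interior_subset hint
  rw [convexHull_insert ⟨A₂, Set.mem_insert _ _⟩, convexHull_pair, mem_convexJoin] at h0
  obtain ⟨p, hp, z, hz, hseg⟩ := h0
  rw [Set.mem_singleton_iff] at hp
  rw [hp] at hseg
  obtain ⟨c, d, hc, hd, hcd, hzeq⟩ := hz
  obtain ⟨a, b, ha, hb0, hab, hA0eq⟩ := hseg
  have hl₁0 : 0 ≤ a := ha
  have hl₂0 : 0 ≤ b * c := mul_nonneg hb0 hc
  have hl₃0 : 0 ≤ b * d := mul_nonneg hb0 hd
  have hlsum : a + b * c + b * d = 1 := by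
    have : a + b * (c + d) = 1 := by rw [hcd, mul_one]; exact hab
    linarith [this]
  have hcomb : a • A₁ + (b * c) • A₂ + (b * d) • A₃ = A₀ := by
    have e : a • A₁ + (b * c) • A₂ + (b * d) • A₃ = a • A₁ + b • (c • A₂ + d • A₃) := by
      module
    rw [e, hzeq, hA0eq]
  set l₁ : ℝ := a with hl₁def
  set l₂ : ℝ := b * c with hl₂def
  set l₃ : ℝ := b * d with hl₃def
  have hsum : l₁ • v₁ + l₂ • v₂ + l₃ • v₃ = 0 := by
    have e : l₁ • v₁ + l₂ • v₂ + l₃ • v₃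
        = (l₁ • A₁ + l₂ • A₂ + l₃ • A₃) - (l₁ + l₂ + l₃) • A₀ := by
      rw [hv₁def, hv₂def, hv₃def]; module
    rw [e, hcomb, hlsum, one_smul, sub_self]
  have e0 : l₁ * v₁ 0 + l₂ * v₂ 0 + l₃ * v₃ 0 = 0 := by
    have h := congrArg (fun z : EuclideanSpace ℝ (Fin 2) => z 0) hsum
    simpa using h
  have e1 : l₁ * v₁ 1 + l₂ * v₂ 1 + l₃ * v₃ 1 = 0 := by
    have h := congrArg (fun z : EuclideanSpace ℝ (Fin 2) => z 1) hsum
    simpa using h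
  -- positivity of the barycentric coordinates
  have hl₁pos : 0 < l₁ := by
    rcases hl₁0.lt_or_eq with h | h
    · exact h
    · exfalso
      have h23 : l₂ • v₂ + l₃ • v₃ = 0 := by
        have := hsum; rw [← h, zero_smul, zero_add] at this; exact this
      rcases hl₂0.lt_or_eq with h₂ | h₂
      · rcases hl₃0.lt_or_eq with h₃ | h₃
        · exact no_seg A₁ A₂ A₃ A₀ hint hv₂ h₂ h₃ h23
        · have : l₂ • v₂ = 0 := by rw [← h₃, zero_smul, add_zero] at h23; exact h23
          rcases smul_eq_zero.1 this with h' | h'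
          · linarith
          · exact hv₂ h'
      · have : l₃ • v₃ = 0 := by rw [← h₂, zero_smul, zero_add] at h23; exact h23
        rcases smul_eq_zero.1 this with h' | h'
        · linarith
        · exact hv₃ h'
  have hl₂pos : 0 < l₂ := by
    rcases hl₂0.lt_or_eq with h | h
    · exact h
    · exfalso
      have h13 : l₁ • v₁ + l₃ • v₃ = 0 := by
        have := hsum; rw [← h, zero_smul, add_zero] at this; exact this
      rcases hl₃0.lt_or_eq with h₃ | h₃
      · exact no_seg A₂ A₁ A₃ A₀ hint2 hv₁ hl₁pos h₃ h13
      · have : l₁ • v₁ = 0 := by rw [← h₃, zero_smul, add_zero] at h13; exact h13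
        rcases smul_eq_zero.1 this with h' | h'
        · exact (ne_of_gt hl₁pos) h'
        · exact hv₁ h'
  have hl₃pos : 0 < l₃ := by
    rcases hl₃0.lt_or_eq with h | h
    · exact h
    · exfalso
      have h12 : l₁ • v₁ + l₂ • v₂ = 0 := by
        have := hsum; rw [← h, zero_smul, add_zero] at this; exact this
      exact no_seg A₃ A₁ A₂ A₀ hint3 hv₁ hl₁pos hl₂pos h12
  -- determinant relations
  have rel1 : l₂ * dd v₁ v₂ + l₃ * dd v₁ v₃ = 0 := by
    simp only [dd]; linear_combination v₁ 0 * e1 - v₁ 1 * e0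
  have rel2 : l₁ * dd v₁ v₂ = l₃ * dd v₂ v₃ := by
    simp only [dd]; linear_combination v₂ 1 * e0 - v₂ 0 * e1
  have rel3 : l₁ * dd v₁ v₃ + l₂ * dd v₂ v₃ = 0 := by
    simp only [dd]; linear_combination v₃ 1 * e0 - v₃ 0 * e1
  -- nondegeneracy of determinants
  have hd23 : dd v₂ v₃ ≠ 0 := by
    intro h
    have h12 : dd v₁ v₂ = 0 := by
      have h' := rel2; rw [h, mul_zero] at h'
      exact (mul_eq_zero.1 h').resolve_left (ne_of_gt hl₁pos)
    have h13 : dd v₁ v₃ = 0 := by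
      have h' := rel3; rw [h, mul_zero, add_zero] at h'
      exact (mul_eq_zero.1 h').resolve_left (ne_of_gt hl₁pos)
    refine star_lt' A₁ A₂ A₃ A₀ hint (perp v₁) (perp_ne_zero hv₁) ?_ ?_ ?_
    · rw [← hv₁def]; exact le_of_eq (inner_perp_self v₁)
    · rw [← hv₂def]; rw [inner_perp]; exact le_of_eq h12
    · rw [← hv₃def]; rw [inner_perp]; exact le_of_eq h13
  have hd12 : dd v₁ v₂ ≠ 0 := by
    intro h
    rw [h, mul_zero] at rel2
    exact hd23 ((mul_eq_zero.1 rel2.symm).resolve_left (ne_of_gt hl₃pos))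
  have hd13 : dd v₁ v₃ ≠ 0 := by
    intro h
    rw [h, mul_zero, zero_add] at rel3
    exact hd23 ((mul_eq_zero.1 rel3).resolve_left (ne_of_gt hl₂pos))
  have hD12 : (0:ℝ) < |dd v₁ v₂| := abs_pos.2 hd12
  have hD13 : (0:ℝ) < |dd v₁ v₃| := abs_pos.2 hd13
  have hD23 : (0:ℝ) < |dd v₂ v₃| := abs_pos.2 hd23
  -- sines of the angles
  have hdswap : ∀ u w : EuclideanSpace ℝ (Fin 2), dd u w = -dd w u := by
    intro u w; simp only [dd]; ring
  have hang : ∀ P Q : EuclideanSpace ℝ (Fin 2),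
      ∠ P A₀ Q = InnerProductGeometry.angle (P - A₀) (Q - A₀) := by
    intro P Q
    simp [EuclideanGeometry.angle, vsub_eq_sub]
  have hs12 : Real.sin (∠ A₁ A₀ A₂) = |dd v₁ v₂| / (‖v₁‖ * ‖v₂‖) := by
    rw [hang, ← hv₁def, ← hv₂def]; exact sin_eq v₁ v₂ hv₁ hv₂
  have hs13 : Real.sin (∠ A₁ A₀ A₃) = |dd v₁ v₃| / (‖v₁‖ * ‖v₃‖) := by
    rw [hang, ← hv₁def, ← hv₃def]; exact sin_eq v₁ v₃ hv₁ hv₃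
  have hs23 : Real.sin (∠ A₂ A₀ A₃) = |dd v₂ v₃| / (‖v₂‖ * ‖v₃‖) := by
    rw [hang, ← hv₂def, ← hv₃def]; exact sin_eq v₂ v₃ hv₂ hv₃
  have hs21 : Real.sin (∠ A₂ A₀ A₁) = |dd v₁ v₂| / (‖v₂‖ * ‖v₁‖) := by
    rw [hang, ← hv₂def, ← hv₁def, sin_eq v₂ v₁ hv₂ hv₁, hdswap v₂ v₁, abs_neg]
  have hs31 : Real.sin (∠ A₃ A₀ A₁) = |dd v₁ v₃| / (‖v₃‖ * ‖v₁‖) := by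
    rw [hang, ← hv₃def, ← hv₁def, sin_eq v₃ v₁ hv₃ hv₁, hdswap v₃ v₁, abs_neg]
  have hs32 : Real.sin (∠ A₃ A₀ A₂) = |dd v₂ v₃| / (‖v₃‖ * ‖v₂‖) := by
    rw [hang, ← hv₃def, ← hv₂def, sin_eq v₃ v₂ hv₃ hv₂, hdswap v₃ v₂, abs_neg]
  -- the common sum S
  set S : ℝ := |dd v₁ v₂| / (‖v₁‖ * ‖v₂‖) + |dd v₁ v₃| / (‖v₁‖ * ‖v₃‖)
      + |dd v₂ v₃| / (‖v₂‖ * ‖v₃‖) with hS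
  have hSpos : 0 < S := by
    have h1 : 0 < |dd v₁ v₂| / (‖v₁‖ * ‖v₂‖) := div_pos hD12 (by positivity)
    have h2 : 0 < |dd v₁ v₃| / (‖v₁‖ * ‖v₃‖) := div_pos hD13 (by positivity)
    have h3 : 0 < |dd v₂ v₃| / (‖v₂‖ * ‖v₃‖) := div_pos hD23 (by positivity)
    rw [hS]; linarith
  -- closed forms for the weights
  have hb₁' : b₁ = C * (|dd v₂ v₃| / (‖v₂‖ * ‖v₃‖)) / S := by
    rw [hb₁, hs12, hs13, hs23]
    exact w1 C ‖v₁‖ ‖v₂‖ ‖v₃‖ _ _ _ S hr₁ hr₂ hr₃ hD12 hD13 hD23 hS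
  have hb₂' : b₂ = C * (|dd v₁ v₃| / (‖v₁‖ * ‖v₃‖)) / S := by
    rw [hb₂, hs21, hs23, hs13]
    exact w2 C ‖v₁‖ ‖v₂‖ ‖v₃‖ _ _ _ S hr₁ hr₂ hr₃ hD12 hD13 hD23 hS
  have hb₃' : b₃ = C * (|dd v₁ v₂| / (‖v₁‖ * ‖v₂‖)) / S := by
    rw [hb₃, hs31, hs32, hs12]
    exact w3 C ‖v₁‖ ‖v₂‖ ‖v₃‖ _ _ _ S hr₁ hr₂ hr₃ hD12 hD13 hD23 hS
  -- absolute-value relations between coordinates and determinants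
  have habs2 : l₁ * |dd v₁ v₃| = l₂ * |dd v₂ v₃| := by
    have h := eq_neg_of_add_eq_zero_left rel3
    have h' := congrArg abs h
    rwa [abs_neg, abs_mul, abs_mul, abs_of_pos hl₁pos, abs_of_pos hl₂pos] at h'
  have habs3 : l₁ * |dd v₁ v₂| = l₃ * |dd v₂ v₃| := by
    have h' := congrArg abs rel2
    rwa [abs_mul, abs_mul, abs_of_pos hl₁pos, abs_of_pos hl₃pos] at h'
  have hl₂eq : l₂ = l₁ * |dd v₁ v₃| / |dd v₂ v₃| := by
    rw [eq_div_iff (ne_of_gt hD23)]; linarith [habs2]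
  have hl₃eq : l₃ = l₁ * |dd v₁ v₂| / |dd v₂ v₃| := by
    rw [eq_div_iff (ne_of_gt hD23)]; linarith [habs3]
  -- the common proportionality constant
  set K : ℝ := C * |dd v₂ v₃| / (S * ‖v₁‖ * ‖v₂‖ * ‖v₃‖ * l₁) with hK
  have hc₁ : b₁ * ‖v₁‖⁻¹ = K * l₁ := by
    rw [hb₁', hK]; exact cc1 C ‖v₁‖ ‖v₂‖ ‖v₃‖ _ S l₁ hr₁ hr₂ hr₃ hSpos hl₁pos
  have hc₂ : b₂ * ‖v₂‖⁻¹ = K * l₂ := by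
    rw [hb₂', hK, hl₂eq]; exact cc2 C ‖v₁‖ ‖v₂‖ ‖v₃‖ _ _ S l₁ hr₁ hr₂ hr₃ hSpos hl₁pos hD23
  have hc₃ : b₃ * ‖v₃‖⁻¹ = K * l₃ := by
    rw [hb₃', hK, hl₃eq]; exact cc3 C ‖v₁‖ ‖v₂‖ ‖v₃‖ _ _ S l₁ hr₁ hr₂ hr₃ hSpos hl₁pos hD23
  -- part 1
  have part1 : b₁ • (‖v₁‖⁻¹ • v₁) + b₂ • (‖v₂‖⁻¹ • v₂) + b₃ • (‖v₃‖⁻¹ • v₃) = 0 := by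
    rw [smul_smul, smul_smul, smul_smul, hc₁, hc₂, hc₃, mul_smul K l₁ v₁, mul_smul K l₂ v₂,
      mul_smul K l₃ v₃, ← smul_add, ← smul_add, hsum, smul_zero]
  refine ⟨part1, ?_⟩
  -- part 2
  have hb₁pos : 0 < b₁ := by
    rw [hb₁']; exact div_pos (mul_pos hC (div_pos hD23 (by positivity))) hSpos
  have hb₂pos : 0 < b₂ := by
    rw [hb₂']; exact div_pos (mul_pos hC (div_pos hD13 (by positivity))) hSpos
  have hb₃pos : 0 < b₃ := by
    rw [hb₃']; exact div_pos (mul_pos hC (div_pos hD12 (by positivity))) hSpos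
  intro x
  have p₁ := subgrad A₁ A₀ x hv₁
  have p₂ := subgrad A₂ A₀ x hv₂
  have p₃ := subgrad A₃ A₀ x hv₃
  have hkey : b₁ * (‖v₁‖⁻¹ * ⟪v₁, x - A₀⟫) + b₂ * (‖v₂‖⁻¹ * ⟪v₂, x - A₀⟫)
      + b₃ * (‖v₃‖⁻¹ * ⟪v₃, x - A₀⟫) = 0 := by
    have h := congrArg (fun z : EuclideanSpace ℝ (Fin 2) => ⟪z, x - A₀⟫) part1
    simp only [inner_add_left, real_inner_smul_left, inner_zero_left] at h
    linarith [h]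
  rw [real_inner_smul_left] at p₁ p₂ p₃
  have m₁ := mul_le_mul_of_nonneg_left p₁ hb₁pos.le
  have m₂ := mul_le_mul_of_nonneg_left p₂ hb₂pos.le
  have m₃ := mul_le_mul_of_nonneg_left p₃ hb₃pos.le
  rw [mul_add] at m₁ m₂ m₃
  linarith [hkey, m₁, m₂, m₃]
end

section
/- Let b₁, …, b_m be positive weights and A₁, …, A_m points in ℝ^N (m ≥ 3, not all collinear). If for every i one has ‖Σ_{j≠i} bⱼ·u(Aⱼ, Aᵢ)‖ > bᵢ, then the unique minimizer A₀ of f(x) = Σᵢ bᵢ|x − Aᵢ| satisfies A₀ ∉ {A₁,…,A_m} and Σᵢ bᵢ·u(A₀, Aᵢ) = 0. -/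
open RealInnerProductSpace

private lemma fermat_term_ub {E : Type*} [NormedAddCommGroup E] [InnerProductSpace ℝ E]
    (v d : E) (hv : v ≠ 0) (t : ℝ) :
    ‖v + t • d‖ ≤ ‖v‖ + t * (⟪v, d⟫ / ‖v‖) + t ^ 2 * ‖d‖ ^ 2 / (2 * ‖v‖) := by
  have ha : (0:ℝ) < ‖v‖ := norm_pos_iff.mpr hv
  have hsq : ‖v + t • d‖ ^ 2 = ‖v‖ ^ 2 + 2 * t * ⟪v, d⟫ + t ^ 2 * ‖d‖ ^ 2 := by
    rw [norm_add_sq_real, real_inner_smul_right, norm_smul]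
    rw [mul_pow]
    rw [Real.norm_eq_abs, sq_abs]
    ring
  have key : ‖v + t • d‖ * (2 * ‖v‖) ≤ 2 * ‖v‖ ^ 2 + 2 * t * ⟪v, d⟫ + t ^ 2 * ‖d‖ ^ 2 := by
    nlinarith [sq_nonneg (‖v + t • d‖ - ‖v‖)]
  calc ‖v + t • d‖ = (‖v + t • d‖ * (2 * ‖v‖)) / (2 * ‖v‖) := by field_simp
    _ ≤ (2 * ‖v‖ ^ 2 + 2 * t * ⟪v, d⟫ + t ^ 2 * ‖d‖ ^ 2) / (2 * ‖v‖) := by gcongr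
    _ = ‖v‖ + t * (⟪v, d⟫ / ‖v‖) + t ^ 2 * ‖d‖ ^ 2 / (2 * ‖v‖) := by field_simp

private lemma fermat_descent {E : Type*} [NormedAddCommGroup E] [InnerProductSpace ℝ E]
    {ι : Type*} (s : Finset ι) (b : ι → ℝ) (hb : ∀ i ∈ s, 0 ≤ b i)
    (v : ι → E) (hv : ∀ i ∈ s, v i ≠ 0) (d : E) (hd : ‖d‖ = 1) (t : ℝ) :
    ∑ i ∈ s, b i * ‖v i + t • d‖ ≤
      (∑ i ∈ s, b i * ‖v i‖) + t * ⟪∑ i ∈ s, b i • (‖v i‖⁻¹ • v i), d⟫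
        + t ^ 2 * ∑ i ∈ s, b i / (2 * ‖v i‖) := by
  have hterm : ∀ i ∈ s, b i * ‖v i + t • d‖ ≤
      b i * ‖v i‖ + t * (b i * (⟪v i, d⟫ / ‖v i‖)) + t ^ 2 * (b i / (2 * ‖v i‖)) := by
    intro i hi
    have h1 := fermat_term_ub (v i) d (hv i hi) t
    have h2 := mul_le_mul_of_nonneg_left h1 (hb i hi)
    calc b i * ‖v i + t • d‖
        ≤ b i * (‖v i‖ + t * (⟪v i, d⟫ / ‖v i‖) + t ^ 2 * ‖d‖ ^ 2 / (2 * ‖v i‖)) := h2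
      _ = b i * ‖v i‖ + t * (b i * (⟪v i, d⟫ / ‖v i‖)) + t ^ 2 * (b i / (2 * ‖v i‖)) := by
          rw [hd]; ring
  calc ∑ i ∈ s, b i * ‖v i + t • d‖
      ≤ ∑ i ∈ s, (b i * ‖v i‖ + t * (b i * (⟪v i, d⟫ / ‖v i‖)) + t ^ 2 * (b i / (2 * ‖v i‖))) :=
        Finset.sum_le_sum hterm
    _ = (∑ i ∈ s, b i * ‖v i‖) + t * ⟪∑ i ∈ s, b i • (‖v i‖⁻¹ • v i), d⟫
        + t ^ 2 * ∑ i ∈ s, b i / (2 * ‖v i‖) := by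
        rw [Finset.sum_add_distrib, Finset.sum_add_distrib, sum_inner, Finset.mul_sum,
          Finset.mul_sum]
        congr 2
        apply Finset.sum_congr rfl
        intro i _
        rw [real_inner_smul_left, real_inner_smul_left]
        ring

private lemma fermat_pos_dir (g C : ℝ) (hC : 0 ≤ C)
    (h : ∀ t : ℝ, 0 < t → t ≤ 1 → 0 ≤ t * g + t ^ 2 * C) : 0 ≤ g := by
  by_contra hg
  push_neg at hg
  set t : ℝ := min 1 ((-g) / (C + 1)) with ht
  have htpos : 0 < t := lt_min one_pos (div_pos (by linarith) (by linarith))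
  have ht1 : t ≤ 1 := min_le_left _ _
  have ht2 : t ≤ (-g) / (C + 1) := min_le_right _ _
  have ht3 : t * (C + 1) ≤ -g := by
    rw [← le_div_iff₀ (by positivity : (0:ℝ) < C + 1)]; exact ht2
  have h4 := h t htpos ht1
  nlinarith [mul_pos htpos htpos, mul_le_mul_of_nonneg_left ht3 htpos.le]

/-- Sturm / Kupitz–Martini: the weighted floating Fermat tree characterization.
`u P Q = (Q - P)/‖Q - P‖` is the unit vector from `P` toward `Q`. -/
theorem weighted_floating_fermat
    (N m : ℕ) (hm : 3 ≤ m)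
    (A : Fin m → EuclideanSpace ℝ (Fin N)) (b : Fin m → ℝ)
    (hb : ∀ i, 0 < b i) (hinj : Function.Injective A)
    (hncol : ¬ Collinear ℝ (Set.range A))
    (u : EuclideanSpace ℝ (Fin N) → EuclideanSpace ℝ (Fin N) → EuclideanSpace ℝ (Fin N))
    (hu : ∀ P Q, u P Q = ‖Q - P‖⁻¹ • (Q - P))
    (hfloat : ∀ i, b i < ‖∑ j ∈ Finset.univ.erase i, b j • u (A j) (A i)‖) :
    ∃ A₀ : EuclideanSpace ℝ (Fin N),
      (∀ x, ∑ i, b i * dist A₀ (A i) ≤ ∑ i, b i * dist x (A i)) ∧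
      (∀ y, (∀ x, ∑ i, b i * dist y (A i) ≤ ∑ i, b i * dist x (A i)) → y = A₀) ∧
      A₀ ∉ Set.range A ∧
      ∑ i, b i • u A₀ (A i) = 0 := by
  classical
  set f : EuclideanSpace ℝ (Fin N) → ℝ := fun x => ∑ i, b i * dist x (A i) with hf
  have hcont : Continuous f := by
    apply continuous_finset_sum
    intro i _
    exact continuous_const.mul (Continuous.dist continuous_id continuous_const)
  have i0 : Fin m := ⟨0, by omega⟩
  have hfnonneg : ∀ x, 0 ≤ f x := by
    intro x
    apply Finset.sum_nonneg
    intro i _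
    exact mul_nonneg (hb i).le dist_nonneg
  have hlb : ∀ x, b i0 * dist x (A i0) ≤ f x := by
    intro x
    exact Finset.single_le_sum (fun i _ => mul_nonneg (hb i).le dist_nonneg)
      (Finset.mem_univ i0)
  set R : ℝ := f (A i0) / b i0 + 1 with hR
  have hRpos : 0 < R := by
    have := hfnonneg (A i0)
    have := hb i0
    positivity
  obtain ⟨A₀, hA₀mem, hA₀min⟩ := (isCompact_closedBall (A i0) R).exists_isMinOn
    ⟨A i0, Metric.mem_closedBall_self hRpos.le⟩ hcont.continuousOn
  have hmin : ∀ x, f A₀ ≤ f x := by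
    intro x
    by_cases hx : x ∈ Metric.closedBall (A i0) R
    · exact hA₀min hx
    · have hdist : R < dist x (A i0) := by
        simpa [Metric.mem_closedBall, not_le] using hx
      have h1 : f (A i0) < f x := by
        have h2 : b i0 * R < b i0 * dist x (A i0) :=
          mul_lt_mul_of_pos_left hdist (hb i0)
        have h3 : b i0 * R = f (A i0) + b i0 := by
          have hb0 : b i0 ≠ 0 := (hb i0).ne'
          rw [hR]
          field_simp
        nlinarith [hlb x, hb i0]
      exact le_of_lt (lt_of_le_of_lt (hA₀min (Metric.mem_closedBall_self hRpos.le)) h1)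
  -- A₀ is not one of the A i
  have hnotin : A₀ ∉ Set.range A := by
    rintro ⟨i, hAi⟩
    have hWb := hfloat i
    set W : EuclideanSpace ℝ (Fin N) := ∑ j ∈ Finset.univ.erase i, b j • u (A j) (A i) with hW
    have hWpos : 0 < ‖W‖ := lt_trans (hb i) hWb
    set d : EuclideanSpace ℝ (Fin N) := -(‖W‖⁻¹ • W) with hd
    have hdnorm : ‖d‖ = 1 := by
      rw [hd, norm_neg, norm_smul, norm_inv, norm_norm]
      field_simp
    have hWd : ⟪W, d⟫ = -‖W‖ := by
      rw [hd, inner_neg_right, real_inner_smul_right, real_inner_self_eq_norm_sq]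
      field_simp
    set C : ℝ := ∑ j ∈ Finset.univ.erase i, b j / (2 * ‖A i - A j‖) with hC
    have hCnn : 0 ≤ C :=
      Finset.sum_nonneg fun j _ => div_nonneg (hb j).le (by positivity)
    have hvne : ∀ j ∈ Finset.univ.erase i, A i - A j ≠ 0 := by
      intro j hj
      have hji : j ≠ i := (Finset.mem_erase.mp hj).1
      exact sub_ne_zero.mpr fun h => hji (hinj h.symm)
    have hGW : (∑ j ∈ Finset.univ.erase i, b j • (‖A i - A j‖⁻¹ • (A i - A j))) = W := by
      rw [hW]
      apply Finset.sum_congr rfl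
      intro j _
      rw [hu]
    have hkey : ∀ t : ℝ, 0 < t → t ≤ 1 →
        f (A i + t • d) ≤ f (A i) + (t * (b i - ‖W‖) + t ^ 2 * C) := by
      intro t ht0 _
      have hsplit : f (A i + t • d) =
          b i * t + ∑ j ∈ Finset.univ.erase i, b j * ‖(A i - A j) + t • d‖ := by
        simp only [hf]
        rw [← Finset.add_sum_erase _ _ (Finset.mem_univ i)]
        congr 1
        · rw [dist_eq_norm]
          have h5 : A i + t • d - A i = t • d := by abel
          rw [h5, norm_smul, hdnorm, Real.norm_eq_abs, abs_of_pos ht0]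
          ring
        · apply Finset.sum_congr rfl
          intro j _
          rw [dist_eq_norm]
          congr 2
          abel
      have hdesc := fermat_descent (Finset.univ.erase i) b (fun j _ => (hb j).le)
        (fun j => A i - A j) hvne d hdnorm t
      rw [hGW, hWd] at hdesc
      have hfAi : f (A i) = ∑ j ∈ Finset.univ.erase i, b j * ‖A i - A j‖ := by
        simp only [hf]
        rw [← Finset.add_sum_erase _ _ (Finset.mem_univ i)]
        simp [dist_eq_norm]
      rw [hsplit, hfAi, hC]
      nlinarith [hdesc]
    have hcontra : (0:ℝ) ≤ b i - ‖W‖ := by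
      apply fermat_pos_dir _ C hCnn
      intro t ht0 ht1
      have h1 := hmin (A i + t • d)
      have hEq : f (A i) = f A₀ := by rw [hAi]
      have h2 := hkey t ht0 ht1
      linarith
    linarith
  -- the gradient condition
  have hvne0 : ∀ i : Fin m, A₀ - A i ≠ 0 := by
    intro i h
    exact hnotin ⟨i, (sub_eq_zero.mp h).symm⟩
  set G : EuclideanSpace ℝ (Fin N) := ∑ i, b i • (‖A₀ - A i‖⁻¹ • (A₀ - A i)) with hG
  set C : ℝ := ∑ i, b i / (2 * ‖A₀ - A i‖) with hC
  have hCnn : 0 ≤ C :=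
    Finset.sum_nonneg fun i _ => div_nonneg (hb i).le (by positivity)
  have hdirnn : ∀ d : EuclideanSpace ℝ (Fin N), ‖d‖ = 1 → 0 ≤ ⟪G, d⟫ := by
    intro d hdnorm
    apply fermat_pos_dir _ C hCnn
    intro t ht0 _
    have hdesc := fermat_descent Finset.univ b (fun j _ => (hb j).le)
      (fun i => A₀ - A i) (fun i _ => hvne0 i) d hdnorm t
    rw [← hG, ← hC] at hdesc
    have h1 := hmin (A₀ + t • d)
    simp only [hf, dist_eq_norm] at h1
    have h3 : (∑ i, b i * ‖A₀ + t • d - A i‖) = ∑ i, b i * ‖(A₀ - A i) + t • d‖ :=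
      Finset.sum_congr rfl fun i _ => by
        rw [show A₀ + t • d - A i = (A₀ - A i) + t • d from by abel]
    rw [h3] at h1
    linarith
  have hGzero : G = 0 := by
    by_contra hGne
    have hGpos : 0 < ‖G‖ := norm_pos_iff.mpr hGne
    have hnrm : ‖-(‖G‖⁻¹ • G)‖ = 1 := by
      rw [norm_neg, norm_smul, norm_inv, norm_norm]
      field_simp
    have h := hdirnn _ hnrm
    rw [inner_neg_right, real_inner_smul_right, real_inner_self_eq_norm_sq] at h
    have heq : ‖G‖⁻¹ * ‖G‖ ^ 2 = ‖G‖ := by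
      field_simp
    rw [heq] at h
    linarith
  have hgrad : ∑ i, b i • u A₀ (A i) = 0 := by
    have hsum : ∑ i, b i • u A₀ (A i) = -G := by
      rw [hG, ← Finset.sum_neg_distrib]
      apply Finset.sum_congr rfl
      intro i _
      rw [hu]
      have h1 : A i - A₀ = -(A₀ - A i) := by abel
      rw [h1, norm_neg, smul_neg, smul_neg]
    rw [hsum, hGzero, neg_zero]
  -- uniqueness
  have huniq : ∀ y, (∀ x, f y ≤ f x) → y = A₀ := by
    intro y hy
    by_contra hne
    have hfy : f y = f A₀ := le_antisymm (hy A₀) (hmin y)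
    set z : EuclideanSpace ℝ (Fin N) := (2:ℝ)⁻¹ • (y + A₀) with hz
    have hzi : ∀ i : Fin m, z - A i = (2:ℝ)⁻¹ • ((y - A i) + (A₀ - A i)) := by
      intro i
      rw [hz]
      module
    have htri : ∀ i : Fin m, dist z (A i) ≤ (dist y (A i) + dist A₀ (A i)) / 2 := by
      intro i
      rw [dist_eq_norm, dist_eq_norm, dist_eq_norm, hzi i, norm_smul, norm_inv, Real.norm_two]
      have := norm_add_le (y - A i) (A₀ - A i)
      linarith
    have hnn : ∀ i ∈ Finset.univ,
        0 ≤ b i * ((dist y (A i) + dist A₀ (A i)) / 2 - dist z (A i)) := by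
      intro i _
      exact mul_nonneg (hb i).le (by linarith [htri i])
    have hexp : ∑ i, b i * ((dist y (A i) + dist A₀ (A i)) / 2 - dist z (A i))
        = f y / 2 + f A₀ / 2 - f z := by
      have e1 : ∀ i : Fin m, b i * ((dist y (A i) + dist A₀ (A i)) / 2 - dist z (A i))
          = b i * dist y (A i) / 2 + b i * dist A₀ (A i) / 2 - b i * dist z (A i) :=
        fun i => by ring
      rw [Finset.sum_congr rfl fun i _ => e1 i, Finset.sum_sub_distrib,
        Finset.sum_add_distrib, ← Finset.sum_div, ← Finset.sum_div]
    have hzero : ∑ i, b i * ((dist y (A i) + dist A₀ (A i)) / 2 - dist z (A i)) = 0 := by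
      apply le_antisymm
      · rw [hexp]
        have := hmin z
        linarith
      · exact Finset.sum_nonneg hnn
    have hall := (Finset.sum_eq_zero_iff_of_nonneg hnn).mp hzero
    apply hncol
    rw [collinear_iff_exists_forall_eq_smul_vadd]
    refine ⟨y, A₀ - y, ?_⟩
    rintro p ⟨i, rfl⟩
    have h0 := hall i (Finset.mem_univ i)
    have h1 : (dist y (A i) + dist A₀ (A i)) / 2 - dist z (A i) = 0 := by
      rcases mul_eq_zero.mp h0 with h | h
      · exact absurd h (hb i).ne'
      · exact h
    have heqi : ‖(y - A i) + (A₀ - A i)‖ = ‖y - A i‖ + ‖A₀ - A i‖ := by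
      rw [dist_eq_norm, dist_eq_norm, dist_eq_norm, hzi i, norm_smul, norm_inv,
        Real.norm_two] at h1
      linarith
    have hray : SameRay ℝ (y - A i) (A₀ - A i) := sameRay_iff_norm_add.mpr heqi
    obtain ⟨p, q, hp, hq, hpq, ha, hc⟩ := hray.exists_eq_smul_add
    have hAy' : A₀ - y = (q - p) • ((y - A i) + (A₀ - A i)) := by
      linear_combination (norm := module) hc - ha
    have hqp : q - p ≠ 0 := by
      intro h
      apply hne
      have h2 : A₀ - y = 0 := by rw [hAy', h, zero_smul]
      exact (sub_eq_zero.mp h2).symm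
    refine ⟨-p / (q - p), ?_⟩
    rw [vadd_eq_add, hAy', smul_smul, div_mul_cancel₀ _ hqp]
    linear_combination (norm := module) -ha
  exact ⟨A₀, hmin, huniq, hnotin, hgrad⟩
end

section
/- Let b₁, …, b_m be positive weights and A₁, …, A_m points in ℝ^N not all collinear. If there is an index i with ‖Σ_{j≠i} bⱼ·u(Aⱼ, Aᵢ)‖ ≤ bᵢ, then Aᵢ itself minimizes f(x) = Σⱼ bⱼ|x − Aⱼ| (the weighted absorbed Fermat tree case). -/
open RealInnerProductSpace

/-- The weighted absorbed Fermat tree case: if at some vertex `Aᵢ` the norm of the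
weighted sum of unit vectors from the other vertices is at most `bᵢ`, then `Aᵢ`
minimizes the weighted sum of distances. -/
theorem weighted_absorbed_fermat
    (N m : ℕ)
    (A : Fin m → EuclideanSpace ℝ (Fin N)) (b : Fin m → ℝ)
    (hb : ∀ i, 0 < b i) (hinj : Function.Injective A)
    (hncol : ¬ Collinear ℝ (Set.range A))
    (u : EuclideanSpace ℝ (Fin N) → EuclideanSpace ℝ (Fin N) → EuclideanSpace ℝ (Fin N))
    (hu : ∀ P Q, u P Q = ‖Q - P‖⁻¹ • (Q - P))
    (i : Fin m)
    (habs : ‖∑ j ∈ Finset.univ.erase i, b j • u (A j) (A i)‖ ≤ b i) :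
    ∀ x, ∑ j, b j * dist (A i) (A j) ≤ ∑ j, b j * dist x (A j) := by
  intro x
  set y : EuclideanSpace ℝ (Fin N) := x - A i with hy
  set v : EuclideanSpace ℝ (Fin N) := ∑ j ∈ Finset.univ.erase i, b j • u (A j) (A i) with hv
  have key : ∀ j ∈ Finset.univ.erase i,
      b j * dist (A i) (A j) + ⟪b j • u (A j) (A i), y⟫ ≤ b j * dist x (A j) := by
    intro j hj
    have hji : A i - A j ≠ 0 := by
      refine sub_ne_zero.mpr fun h => (Finset.mem_erase.mp hj).1 ?_
      exact hinj h.symm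
    have hwn : ‖A i - A j‖ ≠ 0 := norm_ne_zero_iff.mpr hji
    have hun : ‖u (A j) (A i)‖ = 1 := by
      rw [hu, norm_smul, norm_inv, norm_norm, inv_mul_cancel₀ hwn]
    have hcs : ⟪u (A j) (A i), x - A j⟫ ≤ ‖x - A j‖ := by
      calc ⟪u (A j) (A i), x - A j⟫ ≤ ‖u (A j) (A i)‖ * ‖x - A j‖ := real_inner_le_norm _ _
        _ = ‖x - A j‖ := by rw [hun, one_mul]
    have hsplit : ⟪u (A j) (A i), x - A j⟫
        = ⟪u (A j) (A i), y⟫ + ‖A i - A j‖ := by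
      have h1 : x - A j = y + (A i - A j) := by rw [hy]; abel
      rw [h1, inner_add_right, hu]
      congr 1
      rw [real_inner_smul_left, real_inner_self_eq_norm_sq]
      field_simp
    have hbj : 0 ≤ b j := (hb j).le
    have hdi : dist (A i) (A j) = ‖A i - A j‖ := by
      rw [dist_eq_norm]
    have hdx : dist x (A j) = ‖x - A j‖ := dist_eq_norm _ _
    have h2 : ⟪u (A j) (A i), y⟫ + ‖A i - A j‖ ≤ ‖x - A j‖ := hsplit ▸ hcs
    rw [hdi, hdx, real_inner_smul_left]
    nlinarith [mul_le_mul_of_nonneg_left h2 hbj]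
  have hsum := Finset.sum_le_sum key
  rw [Finset.sum_add_distrib, ← sum_inner] at hsum
  have hvy : -(‖v‖ * ‖y‖) ≤ ⟪v, y⟫ := neg_le_of_neg_le (by
    have := real_inner_le_norm v (-y)
    simpa [inner_neg_right, norm_neg] using this)
  have hby : ‖v‖ * ‖y‖ ≤ b i * ‖y‖ :=
    mul_le_mul_of_nonneg_right habs (norm_nonneg _)
  have hdxAi : dist x (A i) = ‖y‖ := by rw [hy, dist_eq_norm]
  have hL : ∑ j, b j * dist (A i) (A j) = ∑ j ∈ Finset.univ.erase i, b j * dist (A i) (A j) := by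
    rw [← Finset.sum_erase_add _ _ (Finset.mem_univ i)]
    simp
  have hR : ∑ j, b j * dist x (A j)
      = ∑ j ∈ Finset.univ.erase i, b j * dist x (A j) + b i * dist x (A i) := by
    rw [← Finset.sum_erase_add _ _ (Finset.mem_univ i)]
  rw [hL, hR, hdxAi]
  linarith
end

section
/- Let A₀ be an interior point of a tetrahedron A₁A₂A₃A₄ in ℝ³, and let b₁,…,b₄ be positive weights such that Σᵢ bᵢ·u(A₀,Aᵢ) = 0. Then b₃ / (a₀₃·Vol(A₀A₁A₂A₄)) = b₄ / (a₀₄·Vol(A₀A₁A₂A₃)), where a₀ᵢ = |A₀Aᵢ| and Vol denotes the 3-dimensional volume of the tetrahedron. -/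
open MeasureTheory ENNReal Pointwise

noncomputable def Mmap (w₁ w₂ w₃ : EuclideanSpace ℝ (Fin 3)) :
    EuclideanSpace ℝ (Fin 3) →ₗ[ℝ] EuclideanSpace ℝ (Fin 3) where
  toFun x := x 0 • w₁ + x 1 • w₂ + x 2 • w₃
  map_add' x y := by simp [add_smul]; abel
  map_smul' c x := by
    simp only [PiLp.smul_apply, smul_eq_mul, RingHom.id_apply, mul_smul, smul_add]

noncomputable def stdC : ℝ≥0∞ :=
  volume (convexHull ℝ ({0, EuclideanSpace.single 0 1, EuclideanSpace.single 1 1,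
    EuclideanSpace.single 2 1} : Set (EuclideanSpace ℝ (Fin 3))))

theorem volhull (A₀ w₁ w₂ w₃ : EuclideanSpace ℝ (Fin 3)) :
    volume (convexHull ℝ ({A₀, A₀ + w₁, A₀ + w₂, A₀ + w₃} : Set (EuclideanSpace ℝ (Fin 3))))
      = ENNReal.ofReal |Matrix.det (Matrix.of ![(w₁ : Fin 3 → ℝ), w₂, w₃])| * stdC := by
  set M := Mmap w₁ w₂ w₃
  have h1 : M '' ({0, EuclideanSpace.single 0 1, EuclideanSpace.single 1 1,
      EuclideanSpace.single 2 1} : Set (EuclideanSpace ℝ (Fin 3))) = {0, w₁, w₂, w₃} := by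
    simp only [Set.image_insert_eq, Set.image_singleton, map_zero]
    have e1 : M (EuclideanSpace.single 0 1) = w₁ := by
      simp [M, Mmap, EuclideanSpace.single_apply]
    have e2 : M (EuclideanSpace.single 1 1) = w₂ := by
      simp [M, Mmap, EuclideanSpace.single_apply]
    have e3 : M (EuclideanSpace.single 2 1) = w₃ := by
      simp [M, Mmap, EuclideanSpace.single_apply]
    rw [e1, e2, e3]
  have h2 : ({A₀, A₀ + w₁, A₀ + w₂, A₀ + w₃} : Set (EuclideanSpace ℝ (Fin 3)))
      = A₀ +ᵥ ({0, w₁, w₂, w₃} : Set (EuclideanSpace ℝ (Fin 3))) := by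
    simp [Set.vadd_set_insert, Set.vadd_set_singleton, vadd_eq_add]
  rw [h2, convexHull_vadd, ← h1, ← M.image_convexHull]
  rw [measure_vadd, Measure.addHaar_image_linearMap]
  congr 1
  congr 1
  rw [← LinearMap.det_toMatrix (PiLp.basisFun 2 ℝ (Fin 3))]
  rw [Matrix.det_fin_three, Matrix.det_fin_three]
  simp [LinearMap.toMatrix_apply, M, Mmap, PiLp.basisFun_apply, EuclideanSpace.single_apply]
  ring_nf

/-- Weighted volume equality at an interior balanced point of a tetrahedron in `ℝ³`. -/
theorem tetrahedron_weighted_volume_equality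
    (A₀ A₁ A₂ A₃ A₄ : EuclideanSpace ℝ (Fin 3)) (b₁ b₂ b₃ b₄ : ℝ)
    (hb₁ : 0 < b₁) (hb₂ : 0 < b₂) (hb₃ : 0 < b₃) (hb₄ : 0 < b₄)
    (hind : AffineIndependent ℝ ![A₁, A₂, A₃, A₄])
    (hint : A₀ ∈ interior (convexHull ℝ ({A₁, A₂, A₃, A₄} : Set (EuclideanSpace ℝ (Fin 3)))))
    (hbal : b₁ • (‖A₁ - A₀‖⁻¹ • (A₁ - A₀)) + b₂ • (‖A₂ - A₀‖⁻¹ • (A₂ - A₀))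
        + b₃ • (‖A₃ - A₀‖⁻¹ • (A₃ - A₀)) + b₄ • (‖A₄ - A₀‖⁻¹ • (A₄ - A₀)) = 0) :
    b₃ / (dist A₀ A₃ *
        (volume (convexHull ℝ ({A₀, A₁, A₂, A₄} : Set (EuclideanSpace ℝ (Fin 3))))).toReal)
      = b₄ / (dist A₀ A₄ *
        (volume (convexHull ℝ ({A₀, A₁, A₂, A₃} : Set (EuclideanSpace ℝ (Fin 3))))).toReal) := by
  set v₁ := A₁ - A₀ with hv₁
  set v₂ := A₂ - A₀ with hv₂
  set v₃ := A₃ - A₀ with hv₃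
  set v₄ := A₄ - A₀ with hv₄
  set D₃ := Matrix.det (Matrix.of ![(v₁ : Fin 3 → ℝ), v₂, v₃]) with hD₃
  set D₄ := Matrix.det (Matrix.of ![(v₁ : Fin 3 → ℝ), v₂, v₄]) with hD₄
  -- rewrite the two volumes
  have hs4 : ({A₀, A₁, A₂, A₄} : Set (EuclideanSpace ℝ (Fin 3)))
      = {A₀, A₀ + v₁, A₀ + v₂, A₀ + v₄} := by
    simp [hv₁, hv₂, hv₄, add_sub_cancel]
  have hs3 : ({A₀, A₁, A₂, A₃} : Set (EuclideanSpace ℝ (Fin 3)))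
      = {A₀, A₀ + v₁, A₀ + v₂, A₀ + v₃} := by
    simp [hv₁, hv₂, hv₃, add_sub_cancel]
  rw [hs4, hs3, volhull, volhull, ← hD₃, ← hD₄]
  rw [ENNReal.toReal_mul, ENNReal.toReal_mul, ENNReal.toReal_ofReal (abs_nonneg _),
    ENNReal.toReal_ofReal (abs_nonneg _)]
  set c := stdC.toReal with hc
  -- distances
  have hd3 : dist A₀ A₃ = ‖v₃‖ := by rw [dist_eq_norm, hv₃, norm_sub_rev]
  have hd4 : dist A₀ A₄ = ‖v₄‖ := by rw [dist_eq_norm, hv₄, norm_sub_rev]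
  rw [hd3, hd4]
  set n₁ := ‖v₁‖; set n₂ := ‖v₂‖
  set n₃ := ‖v₃‖ with hn₃; set n₄ := ‖v₄‖ with hn₄
  -- component equations from the balance condition
  have hcomp : ∀ i : Fin 3, b₁ * (n₁⁻¹ * v₁ i) + b₂ * (n₂⁻¹ * v₂ i)
      + b₃ * (n₃⁻¹ * v₃ i) + b₄ * (n₄⁻¹ * v₄ i) = 0 := by
    intro i
    have := congrArg (fun f : EuclideanSpace ℝ (Fin 3) => f i) hbal
    simpa [PiLp.add_apply, PiLp.smul_apply, smul_eq_mul] using this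
  have h0 := hcomp 0
  have h1 := hcomp 1
  have h2 := hcomp 2
  -- key relation
  have K : b₃ * n₃⁻¹ * D₃ + b₄ * n₄⁻¹ * D₄ = 0 := by
    rw [hD₃, hD₄, Matrix.det_fin_three, Matrix.det_fin_three]
    simp only [Matrix.of_apply, Matrix.cons_val', Matrix.cons_val_zero, Matrix.cons_val_one,
      Matrix.cons_val_two, Matrix.tail_cons, Matrix.head_cons, Matrix.empty_val',
      Matrix.cons_val_fin_one, Matrix.head_fin_const]
    linear_combination (v₁ 1 * v₂ 2 - v₁ 2 * v₂ 1) * h0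
      + (v₁ 2 * v₂ 0 - v₁ 0 * v₂ 2) * h1 + (v₁ 0 * v₂ 1 - v₁ 1 * v₂ 0) * h2
  -- degenerate-row facts
  have hzero : ∀ w : EuclideanSpace ℝ (Fin 3), ‖w‖ = 0 →
      Matrix.det (Matrix.of ![(v₁ : Fin 3 → ℝ), v₂, w]) = 0 := by
    intro w hw
    have : w = 0 := norm_eq_zero.mp hw
    subst this
    rw [Matrix.det_fin_three]
    simp
  by_cases h3 : D₃ = 0
  · -- then D₄ = 0 too, both sides are zero
    have h4 : D₄ = 0 := by
      rcases eq_or_ne n₄ 0 with hn | hn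
      · exact hzero v₄ hn
      · have : b₄ * n₄⁻¹ * D₄ = 0 := by rw [h3] at K; linarith
        have hb : b₄ * n₄⁻¹ ≠ 0 := by positivity
        exact (mul_eq_zero.mp this).resolve_left hb
    rw [h3, h4]
    simp
  · have h4 : D₄ ≠ 0 := by
      intro h4
      rcases eq_or_ne n₃ 0 with hn | hn
      · exact h3 (hzero v₃ hn)
      · have : b₃ * n₃⁻¹ * D₃ = 0 := by rw [h4] at K; linarith
        have hb : b₃ * n₃⁻¹ ≠ 0 := by positivity
        exact h3 ((mul_eq_zero.mp this).resolve_left hb)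
    have hn3 : 0 < n₃ := by
      rcases (norm_nonneg v₃).lt_or_eq with h | h
      · exact h
      · exact absurd (hzero v₃ h.symm) h3
    have hn4 : 0 < n₄ := by
      rcases (norm_nonneg v₄).lt_or_eq with h | h
      · exact h
      · exact absurd (hzero v₄ h.symm) h4
    rcases eq_or_ne c 0 with hc0 | hc0
    · rw [hc0]; simp
    · have hcpos : 0 < c := lt_of_le_of_ne ENNReal.toReal_nonneg (Ne.symm hc0)
      have habs : b₃ * n₃⁻¹ * |D₃| = b₄ * n₄⁻¹ * |D₄| := by
        have hK : b₃ * n₃⁻¹ * D₃ = -(b₄ * n₄⁻¹ * D₄) := by linarith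
        have := congrArg abs hK
        rwa [abs_neg, abs_mul, abs_mul, abs_mul, abs_mul,
          abs_of_pos hb₃, abs_of_pos hb₄, abs_of_pos (inv_pos.mpr hn3),
          abs_of_pos (inv_pos.mpr hn4)] at this
      have e3 : n₃ * n₃⁻¹ = 1 := mul_inv_cancel₀ hn3.ne'
      have e4 : n₄ * n₄⁻¹ = 1 := mul_inv_cancel₀ hn4.ne'
      have key : b₃ * |D₃| * n₄ = b₄ * |D₄| * n₃ := by
        linear_combination (n₃ * n₄) * habs - (b₃ * |D₃| * n₄) * e3 + (b₄ * |D₄| * n₃) * e4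
      rw [div_eq_div_iff (by positivity) (by positivity)]
      linear_combination c * key
end

section
/- Let A₀ be an interior point of an N-simplex A₁A₂⋯A_{N+1} in ℝ^N (N ≥ 2), and let B₁,…,B_{N+1} be positive weights with Σᵢ Bᵢ·u(A₀,Aᵢ) = 0. Then for all i, j: Bᵢ / (aᵢ·Vol(A₁⋯A_{i−1} A₀ A_{i+1}⋯A_{N+1})) = Bⱼ / (aⱼ·Vol(A₁⋯A_{j−1} A₀ A_{j+1}⋯A_{N+1})), where aᵢ = |A₀Aᵢ| and Vol denotes N-dimensional volume. Moreover this common value equals (Σᵢ Bᵢ/aᵢ) / Vol(A₁A₂⋯A_{N+1}). -/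
open MeasureTheory

section aux

variable {n : ℕ}

/-- The affine map fixing all vertices except `i`, sending `A i` to `A₀`. -/
noncomputable def moveVertex (E : Type*) [NormedAddCommGroup E] [NormedSpace ℝ E]
    {ι : Type*} (b : AffineBasis ι ℝ E) (i : ι) (A₀ : E) : E →ᵃ[ℝ] E where
  toFun x := x + b.coord i x • (A₀ - b i)
  linear := LinearMap.id + (b.coord i).linear.smulRight (A₀ - b i)
  map_vadd' p y := by
    have h := (b.coord i).map_vadd p y
    simp only [vadd_eq_add] at h
    simp only [vadd_eq_add, LinearMap.add_apply, LinearMap.id_apply,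
      LinearMap.smulRight_apply, h, add_smul]
    abel

theorem moveVertex_apply {E : Type*} [NormedAddCommGroup E] [NormedSpace ℝ E]
    {ι : Type*} (b : AffineBasis ι ℝ E) (i : ι) (A₀ : E) (x : E) :
    moveVertex E b i A₀ x = x + b.coord i x • (A₀ - b i) := rfl

theorem moveVertex_det {E : Type*} [NormedAddCommGroup E] [NormedSpace ℝ E]
    {ι : Type*} [Fintype ι] [DecidableEq ι] (b : AffineBasis ι ℝ E) (i : ι) (A₀ : E)
    {k : ι} (hk : k ≠ i) :
    LinearMap.det (moveVertex E b i A₀).linear = b.coord i A₀ := by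
  classical
  set e := b.basisOf k with he
  rw [← LinearMap.det_toMatrix e]
  have hi : (⟨i, hk.symm⟩ : {j // j ≠ k}) = ⟨i, hk.symm⟩ := rfl
  have hmat : LinearMap.toMatrix e e (moveVertex E b i A₀).linear
      = Matrix.updateCol (1 : Matrix {j // j ≠ k} {j // j ≠ k} ℝ) ⟨i, hk.symm⟩ (fun j => b.coord (j : ι) A₀) := by
    ext j' j
    rw [LinearMap.toMatrix_apply]
    have hej : e j = b (j : ι) - b k := by
      rw [he, b.basisOf_apply, vsub_eq_sub]
    have hlin : (moveVertex E b i A₀).linear (e j)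
        = e j + ((b.coord i (b (j : ι))) - b.coord i (b k)) • (A₀ - b i) := by
      show LinearMap.id (e j) + ((b.coord i).linear (e j)) • (A₀ - b i) = _
      rw [hej, ← vsub_eq_sub, (b.coord i).linearMap_vsub]
      simp [vsub_eq_sub]
    by_cases hj : (j : ι) = i
    · have hj' : j = ⟨i, hk.symm⟩ := Subtype.ext hj
      have hrepr : (moveVertex E b i A₀).linear (e j) = ∑ m : {l // l ≠ k}, b.coord (m : ι) A₀ • e m := by
        rw [hlin, hj, b.coord_apply_eq i, b.coord_apply_ne hk.symm, sub_zero, one_smul, hej, hj]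
        have hsum : ∀ m : {l // l ≠ k}, b.coord (m : ι) A₀ • e m
            = b.coord (m : ι) A₀ • (b (m : ι) - b k) := by
          intro m; rw [he, b.basisOf_apply, vsub_eq_sub]
        rw [Finset.sum_congr rfl fun m _ => hsum m]
        have h1 : ∑ m : {l // l ≠ k}, b.coord (m : ι) A₀ • (b (m : ι) - b k)
            = ∑ m ∈ Finset.univ.erase k, b.coord m A₀ • (b m - b k) := by
          rw [← Finset.sum_subtype (Finset.univ.erase k)
            (fun m => by simp [Finset.mem_erase]) (fun m => b.coord m A₀ • (b m - b k))]
        rw [h1, Finset.sum_erase _ (by simp)]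
        have h2 : ∑ m, b.coord m A₀ • (b m - b k)
            = (∑ m, b.coord m A₀ • b m) - (∑ m, b.coord m A₀) • b k := by
          rw [Finset.sum_smul]; rw [← Finset.sum_sub_distrib]
          exact Finset.sum_congr rfl fun m _ => by rw [smul_sub]
        rw [h2, b.sum_coord_apply_eq_one, b.linear_combination_coord_eq_self, one_smul]
        abel
      rw [hrepr, e.repr_sum_self]
      rw [hj', Matrix.updateCol_self]
    · have hj' : j ≠ ⟨i, hk.symm⟩ := fun h => hj (congrArg Subtype.val h)
      have : (moveVertex E b i A₀).linear (e j) = e j := by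
        rw [hlin, b.coord_apply_ne (Ne.symm hj), b.coord_apply_ne hk.symm, sub_zero, zero_smul,
          add_zero]
      rw [this, e.repr_self, Matrix.updateCol_ne hj']
      simp [Finsupp.single_apply, Matrix.one_apply, eq_comm]
  rw [hmat, ← Matrix.cramer_apply, Matrix.cramer_one]
  rfl

end aux

/-- Weighted volume equalities for an interior balanced point of an `N`-simplex in `ℝᴺ`. -/
theorem simplex_weighted_volume_equalities
    (N : ℕ) (hN : 2 ≤ N)
    (A : Fin (N + 1) → EuclideanSpace ℝ (Fin N)) (A₀ : EuclideanSpace ℝ (Fin N))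
    (B : Fin (N + 1) → ℝ) (hB : ∀ i, 0 < B i)
    (hind : AffineIndependent ℝ A)
    (hint : A₀ ∈ interior (convexHull ℝ (Set.range A)))
    (hbal : ∑ i, B i • (‖A i - A₀‖⁻¹ • (A i - A₀)) = 0) :
    (∀ i j : Fin (N + 1),
      B i / (dist A₀ (A i) *
          (volume (convexHull ℝ (Set.range (Function.update A i A₀)))).toReal)
        = B j / (dist A₀ (A j) *
          (volume (convexHull ℝ (Set.range (Function.update A j A₀)))).toReal)) ∧
    (∀ i : Fin (N + 1),
      B i / (dist A₀ (A i) *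
          (volume (convexHull ℝ (Set.range (Function.update A i A₀)))).toReal)
        = (∑ k, B k / dist A₀ (A k)) /
            (volume (convexHull ℝ (Set.range A))).toReal) := by
  classical
  haveI : Nontrivial (Fin (N + 1)) := by
    constructor
    exact ⟨⟨0, by omega⟩, ⟨1, by omega⟩, by simp [Fin.ext_iff]⟩
  have htot : affineSpan ℝ (Set.range A) = ⊤ := by
    rw [hind.affineSpan_eq_top_iff_card_eq_finrank_add_one]
    simp [finrank_euclideanSpace_fin]
  let b : AffineBasis (Fin (N + 1)) ℝ (EuclideanSpace ℝ (Fin N)) := ⟨A, hind, htot⟩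
  have hbA : ⇑b = A := rfl
  set t : Fin (N + 1) → ℝ := fun i => b.coord i A₀ with ht_def
  have ht : ∀ i, 0 < t i := by
    have h := b.interior_convexHull
    rw [hbA] at h
    rw [h] at hint
    exact hint
  have htsum : (∑ i, t i) = 1 := b.sum_coord_apply_eq_one A₀
  have htA : ∑ i, t i • A i = A₀ := b.linear_combination_coord_eq_self A₀
  -- distances
  have hA0ne : ∀ i, A₀ ≠ A i := by
    intro i h
    obtain ⟨j, hj⟩ := exists_ne i
    have h0 : b.coord j A₀ = 0 := by rw [h]; exact b.coord_apply_ne hj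
    exact (ht j).ne' h0
  have ha : ∀ i, 0 < dist A₀ (A i) := fun i => dist_pos.mpr (hA0ne i)
  set c : Fin (N + 1) → ℝ := fun i => B i / dist A₀ (A i) with hc_def
  have hc_pos : ∀ i, 0 < c i := fun i => div_pos (hB i) (ha i)
  have hnorm : ∀ i, ‖A i - A₀‖ = dist A₀ (A i) := fun i => by
    rw [dist_eq_norm, norm_sub_rev]
  -- rewrite the balance condition
  have hbal' : ∑ i, c i • (A i - A₀) = 0 := by
    rw [← hbal]
    refine Finset.sum_congr rfl fun i _ => ?_
    rw [smul_smul]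
    congr 1
    rw [hnorm i]
    exact div_eq_mul_inv _ _
  set S : ℝ := ∑ k, c k with hS_def
  have hS_pos : 0 < S := Finset.sum_pos (fun k _ => hc_pos k) Finset.univ_nonempty
  -- key proportionality
  have hkey : ∀ i, c i = S * t i := by
    have h0 : ∑ i, (c i - S * t i) = 0 := by
      rw [Finset.sum_sub_distrib, ← Finset.mul_sum, htsum, mul_one, hS_def, sub_self]
    have h1 : ∑ i, (c i - S * t i) • A i = 0 := by
      have hca : ∑ i, c i • A i = S • A₀ := by
        have := hbal'
        simp only [smul_sub] at this
        rw [Finset.sum_sub_distrib, sub_eq_zero] at this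
        rw [this, ← Finset.sum_smul, hS_def]
      have htA' : ∑ i, (S * t i) • A i = S • A₀ := by
        rw [← htA, Finset.smul_sum]
        exact Finset.sum_congr rfl fun i _ => by rw [smul_smul]
      simp only [sub_smul]
      rw [Finset.sum_sub_distrib, hca, htA', sub_self]
    intro i
    have h2 := affineIndependent_iff.mp hind Finset.univ (fun j => c j - S * t j) h0 h1 i
      (Finset.mem_univ i)
    simp only [sub_eq_zero] at h2
    exact h2
  -- volume scaling
  have hvol : ∀ i, volume (convexHull ℝ (Set.range (Function.update A i A₀)))
      = ENNReal.ofReal (t i) * volume (convexHull ℝ (Set.range A)) := by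
    intro i
    obtain ⟨k, hk⟩ := exists_ne i
    set T := moveVertex (EuclideanSpace ℝ (Fin N)) b i A₀ with hT_def
    have hTA : ∀ j, T (A j) = Function.update A i A₀ j := by
      intro j
      rw [hT_def, moveVertex_apply]
      by_cases hj : j = i
      · subst hj
        rw [show b.coord j (A j) = 1 from b.coord_apply_eq j, one_smul, Function.update_self]
        show A j + (A₀ - A j) = A₀
        abel
      · rw [show b.coord i (A j) = 0 from b.coord_apply_ne (Ne.symm hj)]
        simp [Function.update_of_ne hj]
    have himg : T '' Set.range A = Set.range (Function.update A i A₀) := by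
      rw [← Set.range_comp]
      exact congrArg Set.range (funext hTA)
    have hhull : convexHull ℝ (Set.range (Function.update A i A₀))
        = T '' convexHull ℝ (Set.range A) := by
      rw [← himg, AffineMap.image_convexHull]
    have hdet : LinearMap.det T.linear = t i := moveVertex_det b i A₀ hk
    rw [hhull]
    have hdecomp : T '' convexHull ℝ (Set.range A)
        = (fun x => x + T 0) '' (T.linear '' convexHull ℝ (Set.range A)) := by
      rw [Set.image_image]
      apply Set.image_congr'
      intro x
      show T x = T.linear x + T 0
      rw [T.decomp]
      simp
    rw [hdecomp, Set.image_add_right, measure_preimage_add_right,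
      Measure.addHaar_image_linearMap, hdet, abs_of_pos (ht i)]
  -- volume positivity and finiteness
  set V := volume (convexHull ℝ (Set.range A)) with hV_def
  have hVpos : 0 < V := Measure.measure_pos_of_nonempty_interior volume ⟨A₀, hint⟩
  have hVfin : V ≠ ⊤ :=
    ((Set.finite_range A).isCompact_convexHull (𝕜 := ℝ) |>.measure_lt_top).ne
  have hVr : 0 < V.toReal := ENNReal.toReal_pos hVpos.ne' hVfin
  have hvolr : ∀ i, (volume (convexHull ℝ (Set.range (Function.update A i A₀)))).toReal
      = t i * V.toReal := by
    intro i
    rw [hvol i, ENNReal.toReal_mul, ENNReal.toReal_ofReal (ht i).le]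
  have main : ∀ i : Fin (N + 1),
      B i / (dist A₀ (A i) *
          (volume (convexHull ℝ (Set.range (Function.update A i A₀)))).toReal)
        = S / V.toReal := by
    intro i
    rw [hvolr i, ← div_div]
    have : B i / dist A₀ (A i) = c i := rfl
    rw [this, hkey i, mul_comm S (t i)]
    exact mul_div_mul_left _ _ (ht i).ne'
  exact ⟨fun i j => (main i).trans (main j).symm, fun i => main i⟩
end

section
/- Let A₀, A₁, …, A_{N+1} be points in ℝ^N with A₁,…,A_{N+1} affinely independent and A₀ in the interior of the simplex they span. Given a constant C > 0, there exists a unique tuple of positive weights (B₁,…,B_{N+1}) with Σᵢ Bᵢ = C such that Σᵢ Bᵢ·u(A₀,Aᵢ) = 0, i.e., such that A₀ is the weighted Fermat point of A₁⋯A_{N+1} with these weights. -/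
/-- Unique solvability of the `N`-dimensional inverse weighted Fermat problem:
an interior point of an `N`-simplex is the weighted Fermat point for a unique
tuple of positive weights of prescribed total sum. -/
theorem inverse_weighted_fermat_simplex_existsUnique
    (N : ℕ) (hN : 2 ≤ N)
    (A : Fin (N + 1) → EuclideanSpace ℝ (Fin N)) (A₀ : EuclideanSpace ℝ (Fin N))
    (hind : AffineIndependent ℝ A)
    (hint : A₀ ∈ interior (convexHull ℝ (Set.range A)))
    (C : ℝ) (hC : 0 < C) :
    ∃! B : Fin (N + 1) → ℝ,
      (∀ i, 0 < B i) ∧ (∑ i, B i = C) ∧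
      ∑ i, B i • (‖A i - A₀‖⁻¹ • (A i - A₀)) = 0 := by
  classical
  have hspan : affineSpan ℝ (Set.range A) = ⊤ := by
    rw [hind.affineSpan_eq_top_iff_card_eq_finrank_add_one]
    simp
  let b : AffineBasis (Fin (N + 1)) ℝ (EuclideanSpace ℝ (Fin N)) := ⟨A, hind, hspan⟩
  have hbA : ∀ i, b i = A i := fun i => rfl
  set t : Fin (N + 1) → ℝ := fun i => b.coord i A₀ with ht_def
  have ht : ∀ i, 0 < t i := by
    have hint2 : A₀ ∈ interior (convexHull ℝ (Set.range ⇑b)) := hint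
    rw [b.interior_convexHull] at hint2
    exact hint2
  have htsum : ∑ i, t i = 1 := b.sum_coord_apply_eq_one A₀
  have hA0 : ∑ i, t i • A i = A₀ := b.linear_combination_coord_eq_self A₀
  -- distances are positive
  have hne : ∀ i, A i ≠ A₀ := by
    intro i h
    haveI : Nontrivial (Fin (N + 1)) := Fin.nontrivial_iff_two_le.mpr (by omega)
    obtain ⟨j, hj⟩ := exists_ne i
    have : t j = 0 := by
      rw [ht_def]
      simp only
      rw [← h, ← hbA i, b.coord_apply]
      simp [hj]
    exact absurd this (ne_of_gt (ht j))
  have hd : ∀ i, 0 < ‖A i - A₀‖ := fun i => by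
    simpa [sub_eq_zero] using hne i
  -- the key null combination
  have hnull : ∑ i, t i • (A i - A₀) = 0 := by
    simp only [smul_sub]
    rw [Finset.sum_sub_distrib, hA0, ← Finset.sum_smul, htsum, one_smul, sub_self]
  set S : ℝ := ∑ i, t i * ‖A i - A₀‖ with hS_def
  have hS : 0 < S := Finset.sum_pos (fun i _ => mul_pos (ht i) (hd i)) Finset.univ_nonempty
  -- uniqueness core: any valid B is forced
  have key : ∀ B : Fin (N + 1) → ℝ,
      ((∀ i, 0 < B i) ∧ (∑ i, B i = C) ∧
        ∑ i, B i • (‖A i - A₀‖⁻¹ • (A i - A₀)) = 0) →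
      ∀ i, B i = (C / S) * (t i * ‖A i - A₀‖) := by
    rintro B ⟨hpos, hsum, heq⟩
    set w : Fin (N + 1) → ℝ := fun i => B i * ‖A i - A₀‖⁻¹ with hw_def
    have hweq : ∑ i, w i • (A i - A₀) = 0 := by
      simpa [hw_def, smul_smul] using heq
    set s : ℝ := ∑ i, w i with hs_def
    have hforced : ∀ i, w i = s * t i := by
      have hc0 : ∑ i, (w i - s * t i) = 0 := by
        rw [Finset.sum_sub_distrib, ← Finset.mul_sum, htsum, mul_one, sub_self]
      have h2 : ∑ i, (w i - s * t i) • (A i - A₀) = 0 := by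
        simp only [sub_smul, mul_smul]
        rw [Finset.sum_sub_distrib, hweq, ← Finset.smul_sum, hnull, smul_zero,
          sub_self]
      have hcv : ∑ i, (w i - s * t i) • A i = 0 := by
        have expand : ∀ i, (w i - s * t i) • A i
            = (w i - s * t i) • (A i - A₀) + (w i - s * t i) • A₀ := by
          intro i; rw [smul_sub]; abel
        rw [Finset.sum_congr rfl (fun i _ => expand i), Finset.sum_add_distrib, h2,
          zero_add, ← Finset.sum_smul, hc0, zero_smul]
      intro i
      have h0 : w i - s * t i = 0 := by
        simpa using affineIndependent_iff.mp hind Finset.univ (fun i => w i - s * t i)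
          hc0 hcv i (Finset.mem_univ i)
      linarith
    have hBi : ∀ i, B i = s * (t i * ‖A i - A₀‖) := by
      intro i
      have h1 : w i * ‖A i - A₀‖ = B i := by
        rw [hw_def]
        field_simp [(hd i).ne']
      rw [← h1, hforced i]; ring
    have hsC : s * S = C := by
      rw [hS_def, Finset.mul_sum, ← hsum]
      exact Finset.sum_congr rfl fun i _ => (hBi i).symm
    have hs_val : s = C / S := by field_simp [ne_of_gt hS] at hsC ⊢; linarith
    intro i; rw [hBi i, hs_val]
  refine ⟨fun i => (C / S) * (t i * ‖A i - A₀‖), ⟨?_, ?_, ?_⟩, fun B hB => funext (key B hB)⟩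
  · intro i
    exact mul_pos (div_pos hC hS) (mul_pos (ht i) (hd i))
  · rw [← Finset.mul_sum, ← hS_def, div_mul_cancel₀ _ (ne_of_gt hS)]
  · have : ∀ i, ((C / S) * (t i * ‖A i - A₀‖)) • (‖A i - A₀‖⁻¹ • (A i - A₀))
        = (C / S) • (t i • (A i - A₀)) := by
      intro i
      rw [smul_smul, smul_smul]
      congr 1
      field_simp [(hd i).ne']
    rw [Finset.sum_congr rfl (fun i _ => this i), ← Finset.smul_sum, hnull, smul_zero]
end

section
/- Let A₀, A₁, …, A₅ be points in ℝ⁴, with A₁,…,A₅ affinely independent and A₀ interior to the 4-simplex A₁A₂A₃A₄A₅. Suppose positive weights B₁,…,B₅ satisfy Σᵢ Bᵢ·u(A₀,Aᵢ) = 0. Let n be a unit normal to the 3-dimensional affine hyperplane through A₀, A₁, A₂, A₃ (which exists since these four points are affinely independent). Then B₄·|⟨u(A₀,A₄), n⟩| = B₅·|⟨u(A₀,A₅), n⟩|. -/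
open RealInnerProductSpace
/-- Key step of the 4-INVWF problem in `ℝ⁴`: projecting the balancing condition onto
the unit normal of the hyperplane through `A₀, A₁, A₂, A₃` relates `B₄` and `B₅`. -/
theorem invwf_r4_normal_projection
    (A₀ A₁ A₂ A₃ A₄ A₅ : EuclideanSpace ℝ (Fin 4))
    (B₁ B₂ B₃ B₄ B₅ : ℝ)
    (hB₁ : 0 < B₁) (hB₂ : 0 < B₂) (hB₃ : 0 < B₃) (hB₄ : 0 < B₄) (hB₅ : 0 < B₅)
    (hind : AffineIndependent ℝ ![A₁, A₂, A₃, A₄, A₅])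
    (hint : A₀ ∈ interior (convexHull ℝ
        ({A₁, A₂, A₃, A₄, A₅} : Set (EuclideanSpace ℝ (Fin 4)))))
    (hbal : B₁ • (‖A₁ - A₀‖⁻¹ • (A₁ - A₀)) + B₂ • (‖A₂ - A₀‖⁻¹ • (A₂ - A₀))
        + B₃ • (‖A₃ - A₀‖⁻¹ • (A₃ - A₀)) + B₄ • (‖A₄ - A₀‖⁻¹ • (A₄ - A₀))
        + B₅ • (‖A₅ - A₀‖⁻¹ • (A₅ - A₀)) = 0)
    (n : EuclideanSpace ℝ (Fin 4)) (hn : ‖n‖ = 1)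
    (hn₁ : ⟪A₁ - A₀, n⟫ = 0) (hn₂ : ⟪A₂ - A₀, n⟫ = 0) (hn₃ : ⟪A₃ - A₀, n⟫ = 0) :
    B₄ * |⟪‖A₄ - A₀‖⁻¹ • (A₄ - A₀), n⟫| = B₅ * |⟪‖A₅ - A₀‖⁻¹ • (A₅ - A₀), n⟫| := by
  have h := congrArg (fun v : EuclideanSpace ℝ (Fin 4) => ⟪v, n⟫) hbal
  simp only [inner_add_left, real_inner_smul_left, inner_zero_left, hn₁, hn₂, hn₃,
    mul_zero, zero_add, add_zero] at h
  have key : B₄ * (‖A₄ - A₀‖⁻¹ * ⟪A₄ - A₀, n⟫)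
      = -(B₅ * (‖A₅ - A₀‖⁻¹ * ⟪A₅ - A₀, n⟫)) := by linarith
  have habs : ∀ (b x : ℝ), 0 < b → b * |x| = |b * x| := fun b x hb => by
    rw [abs_mul, abs_of_pos hb]
  rw [real_inner_smul_left, real_inner_smul_left, habs _ _ hB₄, habs _ _ hB₅, key, abs_neg]
end

section
/- Let A₀ be interior to tetrahedron A₁A₂A₃A₄ in ℝ³, with positive weights b₁,…,b₄ balancing at A₀ (Σ bᵢ u(A₀,Aᵢ) = 0). Then the ratio of squared weights satisfies (b_j/b_i)² = (sin²α_{k0m} − cos²α_{m0i} − cos²α_{k0i} + 2cos α_{m0i}·cos α_{k0i}·cos α_{k0m}) / (sin²α_{k0m} − cos²α_{m0j} − cos²α_{k0j} + 2cos α_{m0j}·cos α_{k0j}·cos α_{k0m}) for {i,j,k,m} = {1,2,3,4}, where α_{p0q} = ∠A_pA₀A_q. -/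
open EuclideanGeometry
open scoped RealInnerProductSpace

private lemma gram3 (x0 x1 x2 y0 y1 y2 z0 z1 z2 : ℝ) :
    (x0 * (y1 * z2 - y2 * z1) + x1 * (y2 * z0 - y0 * z2) + x2 * (y0 * z1 - y1 * z0)) ^ 2 =
      (x0 * x0 + x1 * x1 + x2 * x2) * (y0 * y0 + y1 * y1 + y2 * y2) *
          (z0 * z0 + z1 * z1 + z2 * z2)
        + 2 * ((x0 * y0 + x1 * y1 + x2 * y2) * (y0 * z0 + y1 * z1 + y2 * z2) *
            (x0 * z0 + x1 * z1 + x2 * z2))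
        - (x0 * x0 + x1 * x1 + x2 * x2) * (y0 * z0 + y1 * z1 + y2 * z2) ^ 2
        - (y0 * y0 + y1 * y1 + y2 * y2) * (x0 * z0 + x1 * z1 + x2 * z2) ^ 2
        - (z0 * z0 + z1 * z1 + z2 * z2) * (x0 * y0 + x1 * y1 + x2 * y2) ^ 2 := by
  ring

/-- Explicit solution of the inverse weighted Fermat problem for tetrahedra in `ℝ³`:
the ratio of squared weights in terms of the six angles at the interior point `A₀`. -/
theorem invwf_tetrahedron_weight_ratio
    (A : Fin 4 → EuclideanSpace ℝ (Fin 3)) (A₀ : EuclideanSpace ℝ (Fin 3))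
    (b : Fin 4 → ℝ) (hb : ∀ i, 0 < b i)
    (hind : AffineIndependent ℝ A)
    (hint : A₀ ∈ interior (convexHull ℝ (Set.range A)))
    (hbal : ∑ i, b i • (‖A i - A₀‖⁻¹ • (A i - A₀)) = 0)
    (i j k m : Fin 4)
    (hijkm : ({i, j, k, m} : Finset (Fin 4)) = Finset.univ)
    (hden : Real.sin (∠ (A k) A₀ (A m)) ^ 2 - Real.cos (∠ (A m) A₀ (A j)) ^ 2
        - Real.cos (∠ (A k) A₀ (A j)) ^ 2
        + 2 * Real.cos (∠ (A m) A₀ (A j)) * Real.cos (∠ (A k) A₀ (A j))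
          * Real.cos (∠ (A k) A₀ (A m)) ≠ 0) :
    (b j / b i) ^ 2 =
      (Real.sin (∠ (A k) A₀ (A m)) ^ 2 - Real.cos (∠ (A m) A₀ (A i)) ^ 2
        - Real.cos (∠ (A k) A₀ (A i)) ^ 2
        + 2 * Real.cos (∠ (A m) A₀ (A i)) * Real.cos (∠ (A k) A₀ (A i))
          * Real.cos (∠ (A k) A₀ (A m))) /
      (Real.sin (∠ (A k) A₀ (A m)) ^ 2 - Real.cos (∠ (A m) A₀ (A j)) ^ 2
        - Real.cos (∠ (A k) A₀ (A j)) ^ 2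
        + 2 * Real.cos (∠ (A m) A₀ (A j)) * Real.cos (∠ (A k) A₀ (A j))
          * Real.cos (∠ (A k) A₀ (A m))) := by
  classical
  -- `A` is an affine basis
  have htop : affineSpan ℝ (Set.range A) = ⊤ := by
    rw [hind.affineSpan_eq_top_iff_card_eq_finrank_add_one]
    simp
  let B : AffineBasis (Fin 4) ℝ (EuclideanSpace ℝ (Fin 3)) := ⟨A, hind, htop⟩
  have hrange : Set.range (B : Fin 4 → EuclideanSpace ℝ (Fin 3)) = Set.range A := rfl
  have hpos : ∀ p, 0 < B.coord p A₀ := by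
    rw [← hrange, B.interior_convexHull] at hint
    exact hint
  -- the vertices are distinct from `A₀`
  have hne : ∀ l, A l - A₀ ≠ 0 := by
    intro l h
    rw [sub_eq_zero] at h
    obtain ⟨p, hp⟩ := exists_ne l
    have h0 : B.coord p (A l) = 0 := B.coord_apply_ne hp
    rw [h] at h0
    exact absurd h0 (hpos p).ne'
  have hnorm_ne : ∀ l, ‖A l - A₀‖ ≠ 0 := fun l => norm_ne_zero_iff.mpr (hne l)
  -- unit vectors
  set u : Fin 4 → EuclideanSpace ℝ (Fin 3) := fun l => ‖A l - A₀‖⁻¹ • (A l - A₀) with hu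
  have hbal' : ∑ l, b l • u l = 0 := by rw [hu]; exact hbal
  have hnorm : ∀ l, ⟪u l, u l⟫ = 1 := by
    intro l
    rw [real_inner_self_eq_norm_sq, hu]
    simp only [norm_smul, norm_inv, norm_norm]
    rw [inv_mul_cancel₀ (hnorm_ne l)]
    norm_num
  have hcos : ∀ p q, Real.cos (∠ (A p) A₀ (A q)) = ⟪u p, u q⟫ := by
    intro p q
    rw [EuclideanGeometry.angle, InnerProductGeometry.cos_angle, hu]
    simp only [vsub_eq_sub, real_inner_smul_left, real_inner_smul_right]
    field_simp
  -- coordinate expansion of the inner product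
  have hinner : ∀ x y : EuclideanSpace ℝ (Fin 3),
      ⟪x, y⟫ = x 0 * y 0 + x 1 * y 1 + x 2 * y 2 := by
    intro x y
    simp [PiLp.inner_apply, RCLike.inner_apply, Fin.sum_univ_three]
    ring
  -- the cross product of `u k` and `u m`
  let n : EuclideanSpace ℝ (Fin 3) := (WithLp.equiv 2 (Fin 3 → ℝ)).symm
    ![u k 1 * u m 2 - u k 2 * u m 1, u k 2 * u m 0 - u k 0 * u m 2,
      u k 0 * u m 1 - u k 1 * u m 0]
  have hn0 : n 0 = u k 1 * u m 2 - u k 2 * u m 1 := rfl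
  have hn1 : n 1 = u k 2 * u m 0 - u k 0 * u m 2 := rfl
  have hn2 : n 2 = u k 0 * u m 1 - u k 1 * u m 0 := rfl
  have hFk : ⟪u k, n⟫ = 0 := by
    rw [hinner, hn0, hn1, hn2]; ring
  have hFm : ⟪u m, n⟫ = 0 := by
    rw [hinner, hn0, hn1, hn2]; ring
  -- Gram determinant identity
  have hgram : ∀ p, ⟪u p, n⟫ ^ 2 =
      ⟪u p, u p⟫ * ⟪u k, u k⟫ * ⟪u m, u m⟫
        + 2 * (⟪u p, u k⟫ * ⟪u k, u m⟫ * ⟪u p, u m⟫)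
        - ⟪u p, u p⟫ * ⟪u k, u m⟫ ^ 2
        - ⟪u k, u k⟫ * ⟪u p, u m⟫ ^ 2
        - ⟪u m, u m⟫ * ⟪u p, u k⟫ ^ 2 := by
    intro p
    simp only [hinner, hn0, hn1, hn2]
    try exact gram3 _ _ _ _ _ _ _ _ _
  have hgram1 : ∀ p, ⟪u p, n⟫ ^ 2 =
      1 - ⟪u k, u m⟫ ^ 2 - ⟪u m, u p⟫ ^ 2 - ⟪u k, u p⟫ ^ 2
        + 2 * ⟪u m, u p⟫ * ⟪u k, u p⟫ * ⟪u k, u m⟫ := by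
    intro p
    rw [hgram p, hnorm p, hnorm k, hnorm m, real_inner_comm (u p) (u m),
      real_inner_comm (u p) (u k)]
    ring
  -- rewrite the angle expressions
  have e1 : ∀ p, Real.sin (∠ (A k) A₀ (A m)) ^ 2 - Real.cos (∠ (A m) A₀ (A p)) ^ 2
      - Real.cos (∠ (A k) A₀ (A p)) ^ 2
      + 2 * Real.cos (∠ (A m) A₀ (A p)) * Real.cos (∠ (A k) A₀ (A p))
        * Real.cos (∠ (A k) A₀ (A m)) = ⟪u p, n⟫ ^ 2 := by
    intro p
    rw [Real.sin_sq, hcos k m, hcos m p, hcos k p, hgram1 p]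
    try ring
  -- distinctness
  have hcard : ({i, j, k, m} : Finset (Fin 4)).card = 4 := by rw [hijkm]; simp
  have h3le : ∀ a c d : Fin 4, ({a, c, d} : Finset (Fin 4)).card ≤ 3 := by
    intro a c d
    calc ({a, c, d} : Finset (Fin 4)).card ≤ ({c, d} : Finset (Fin 4)).card + 1 :=
          Finset.card_insert_le _ _
      _ ≤ ({d} : Finset (Fin 4)).card + 1 + 1 :=
          Nat.add_le_add_right (Finset.card_insert_le _ _) 1
      _ ≤ 3 := by simp
  have hij : i ≠ j := by
    rintro rfl
    have hss : ({i, i, k, m} : Finset (Fin 4)) ⊆ {i, k, m} := by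
      intro x hx; simp at hx ⊢; tauto
    have := (Finset.card_le_card hss).trans (h3le _ _ _); omega
  have hik : i ≠ k := by
    rintro rfl
    have hss : ({i, j, i, m} : Finset (Fin 4)) ⊆ {i, j, m} := by
      intro x hx; simp at hx ⊢; tauto
    have := (Finset.card_le_card hss).trans (h3le _ _ _); omega
  have him : i ≠ m := by
    rintro rfl
    have hss : ({i, j, k, i} : Finset (Fin 4)) ⊆ {i, j, k} := by
      intro x hx; simp at hx ⊢; tauto
    have := (Finset.card_le_card hss).trans (h3le _ _ _); omega
  have hjk : j ≠ k := by
    rintro rfl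
    have hss : ({i, j, j, m} : Finset (Fin 4)) ⊆ {i, j, m} := by
      intro x hx; simp at hx ⊢; tauto
    have := (Finset.card_le_card hss).trans (h3le _ _ _); omega
  have hjm : j ≠ m := by
    rintro rfl
    have hss : ({i, j, k, j} : Finset (Fin 4)) ⊆ {i, j, k} := by
      intro x hx; simp at hx ⊢; tauto
    have := (Finset.card_le_card hss).trans (h3le _ _ _); omega
  have hkm : k ≠ m := by
    rintro rfl
    have hss : ({i, j, k, k} : Finset (Fin 4)) ⊆ {i, j, k} := by
      intro x hx; simp at hx ⊢; tauto
    have := (Finset.card_le_card hss).trans (h3le _ _ _); omega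
  -- project the balance equation onto `n`
  have hsum : ∑ l, b l * ⟪u l, n⟫ = 0 := by
    have h := congrArg (fun x : EuclideanSpace ℝ (Fin 3) => ⟪x, n⟫) hbal'
    simpa [sum_inner, real_inner_smul_left, Finset.mul_sum, mul_assoc] using h
  rw [← hijkm] at hsum
  have hni : i ∉ ({j, k, m} : Finset (Fin 4)) := by simp [hij, hik, him]
  have hnj : j ∉ ({k, m} : Finset (Fin 4)) := by simp [hjk, hjm]
  have hnk : k ∉ ({m} : Finset (Fin 4)) := by simp [hkm]
  rw [Finset.sum_insert hni, Finset.sum_insert hnj, Finset.sum_insert hnk,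
    Finset.sum_singleton, hFk, hFm] at hsum
  have hkey : b i * ⟪u i, n⟫ + b j * ⟪u j, n⟫ = 0 := by linarith
  -- conclude
  rw [e1 i, e1 j]
  rw [e1 j] at hden
  have hsq : b j ^ 2 * ⟪u j, n⟫ ^ 2 = b i ^ 2 * ⟪u i, n⟫ ^ 2 := by
    linear_combination (b j * ⟪u j, n⟫ - b i * ⟪u i, n⟫) * hkey
  rw [div_pow, div_eq_div_iff (pow_ne_zero 2 (hb i).ne') hden]
  linarith [hsq]
end

section
/- Let A₁⋯A_{N+1} be an N-simplex inscribed in the sphere S^{N−1}(O, r) in ℝ^N, and for ε ∈ (0, |A_{N+1}O|) let A₀(ε) be the point on segment [A_{N+1}, O] at distance ε from A_{N+1}. Let (B₁(ε),…,B_{N+1}(ε)) be the unique positive weights with sum C for which A₀(ε) satisfies the balancing condition Σᵢ Bᵢ(ε)·u(A₀(ε), Aᵢ) = 0 (assuming A₀(ε) is interior to the simplex). Then as ε → 0⁺, the weighted-absorption defect |‖Σ_{i=1}^{N} Bᵢ(ε)·u(A_{N+1}, Aᵢ)‖ − B_{N+1}(ε)| tends to 0; equivalently, in the limit the configuration satisfies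 the absorbed Fermat condition at the vertex A_{N+1}. -/
open Filter

/-- ε-approximation of the absorbed weighted Fermat tree by floating ones: for an
`N`-simplex inscribed in a sphere, moving the Fermat point from the vertex `A_{N+1}`
toward the center by `ε` and taking the unique balancing weights of total sum `C`,
the weighted-absorption defect at `A_{N+1}` tends to `0` as `ε → 0⁺`. -/
theorem epsilon_approximation_absorbed_fermat
    (N : ℕ) (hN : 2 ≤ N)
    (A : Fin (N + 1) → EuclideanSpace ℝ (Fin N))
    (O : EuclideanSpace ℝ (Fin N)) (r : ℝ) (hr : 0 < r)
    (hsphere : ∀ i, dist (A i) O = r)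
    (hind : AffineIndependent ℝ A)
    (C : ℝ) (hC : 0 < C)
    (A₀ : ℝ → EuclideanSpace ℝ (Fin N))
    (hA₀ : ∀ ε : ℝ, A₀ ε = A (Fin.last N) +
      (ε / dist (A (Fin.last N)) O) • (O - A (Fin.last N)))
    (B : ℝ → Fin (N + 1) → ℝ)
    (hB : ∀ ε ∈ Set.Ioo (0 : ℝ) (dist (A (Fin.last N)) O),
      A₀ ε ∈ interior (convexHull ℝ (Set.range A)) ∧
      (∀ i, 0 < B ε i) ∧ (∑ i, B ε i = C) ∧
      ∑ i, B ε i • (‖A i - A₀ ε‖⁻¹ • (A i - A₀ ε)) = 0) :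
    Tendsto (fun ε : ℝ =>
        |‖∑ i : Fin N, B ε i.castSucc •
            (‖A i.castSucc - A (Fin.last N)‖⁻¹ • (A i.castSucc - A (Fin.last N)))‖
          - B ε (Fin.last N)|)
      (nhdsWithin 0 (Set.Ioi 0)) (nhds 0) := by
  classical
  set d := dist (A (Fin.last N)) O with hd
  have hdr : d = r := hsphere _
  have hd0 : 0 < d := hdr ▸ hr
  have hinj := hind.injective
  have hne : ∀ i : Fin N, A i.castSucc - A (Fin.last N) ≠ 0 := by
    intro i
    rw [sub_ne_zero]
    exact fun h => (Fin.castSucc_lt_last i).ne (hinj h)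
  have hxnorm : ‖O - A (Fin.last N)‖ = d := by
    rw [← dist_eq_norm, dist_comm]
  have hA₀fun : A₀ = fun ε : ℝ => A (Fin.last N) + (ε / d) • (O - A (Fin.last N)) :=
    funext hA₀
  set w : Fin N → EuclideanSpace ℝ (Fin N) :=
    fun i => ‖A i.castSucc - A (Fin.last N)‖⁻¹ • (A i.castSucc - A (Fin.last N)) with hw
  set v : Fin N → ℝ → EuclideanSpace ℝ (Fin N) :=
    fun i ε => A i.castSucc - A₀ ε with hv
  set h : ℝ → ℝ := fun ε => C * ∑ i : Fin N, ‖w i - ‖v i ε‖⁻¹ • v i ε‖ with hh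
  have hvcont : ∀ i : Fin N, Continuous (v i) := by
    intro i
    rw [hv, hA₀fun]
    exact continuous_const.sub (continuous_const.add
      ((continuous_id.div_const d).smul continuous_const))
  have hv0 : ∀ i : Fin N, v i 0 = A i.castSucc - A (Fin.last N) := by
    intro i
    simp [hv, hA₀fun]
  have hterm : ∀ i : Fin N,
      Tendsto (fun ε : ℝ => ‖w i - ‖v i ε‖⁻¹ • v i ε‖) (nhds 0) (nhds 0) := by
    intro i
    have h1 : ContinuousAt (fun ε : ℝ => ‖v i ε‖⁻¹) 0 :=
      ContinuousAt.inv₀ ((hvcont i).norm.continuousAt)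
        (by rw [hv0 i]; exact norm_ne_zero_iff.mpr (hne i))
    have h2 : ContinuousAt (v i) 0 := (hvcont i).continuousAt
    have hci : ContinuousAt (fun ε : ℝ => ‖w i - ‖v i ε‖⁻¹ • v i ε‖) 0 :=
      (ContinuousAt.sub continuousAt_const (h1.smul h2)).norm
    have hval : ‖w i - ‖v i 0‖⁻¹ • v i 0‖ = 0 := by
      rw [hv0 i]
      simp [hw]
    have := hci.tendsto
    rwa [hval] at this
  have hhcont : Tendsto h (nhds 0) (nhds 0) := by
    rw [hh]
    have hs := tendsto_finset_sum (Finset.univ : Finset (Fin N))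
      (fun i _ => hterm i)
    have := hs.const_mul C
    simpa using this
  have hhcont' : Tendsto h (nhdsWithin 0 (Set.Ioi 0)) (nhds 0) :=
    hhcont.mono_left nhdsWithin_le_nhds
  have hmem : Set.Ioo (0:ℝ) d ∈ nhdsWithin (0:ℝ) (Set.Ioi 0) :=
    Ioo_mem_nhdsGT_of_mem ⟨le_refl 0, hd0⟩
  apply squeeze_zero' (Eventually.of_forall (fun ε => abs_nonneg _)) _ hhcont'
  filter_upwards [hmem] with ε hε
  obtain ⟨hε1, hε2⟩ := hε
  obtain ⟨-, hpos, hsum, hbal⟩ := hB ε ⟨hε1, hε2⟩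
  have hAeq : A (Fin.last N) - A₀ ε = -((ε / d) • (O - A (Fin.last N))) := by
    rw [hA₀ ε]
    abel
  have hnormlast : ‖A (Fin.last N) - A₀ ε‖ = ε := by
    rw [hAeq, norm_neg, norm_smul, Real.norm_eq_abs, hxnorm,
      abs_of_pos (div_pos hε1 hd0), div_mul_cancel₀ _ hd0.ne']
  have hεne : (ε : ℝ) ≠ 0 := hε1.ne'
  have hunitlast : ‖A (Fin.last N) - A₀ ε‖⁻¹ • (A (Fin.last N) - A₀ ε)
      = -(d⁻¹ • (O - A (Fin.last N))) := by
    rw [hnormlast, hAeq, smul_neg, smul_smul]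
    congr 2
    field_simp
  have hbal' : (∑ i : Fin N, B ε i.castSucc • (‖v i ε‖⁻¹ • v i ε))
      = B ε (Fin.last N) • (d⁻¹ • (O - A (Fin.last N))) := by
    have hb := hbal
    rw [Fin.sum_univ_castSucc] at hb
    rw [hunitlast, smul_neg, ← sub_eq_add_neg, sub_eq_zero] at hb
    exact hb
  have hS₀norm : ‖∑ i : Fin N, B ε i.castSucc • (‖v i ε‖⁻¹ • v i ε)‖
      = B ε (Fin.last N) := by
    rw [hbal', norm_smul, norm_smul, Real.norm_eq_abs, Real.norm_eq_abs, hxnorm,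
      abs_of_pos (hpos _), abs_of_pos (inv_pos.mpr hd0), inv_mul_cancel₀ hd0.ne', mul_one]
  have hBle : ∀ j : Fin (N+1), B ε j ≤ C := by
    intro j
    rw [← hsum]
    exact Finset.single_le_sum (fun k _ => (hpos k).le) (Finset.mem_univ j)
  calc |‖∑ i : Fin N, B ε i.castSucc • w i‖ - B ε (Fin.last N)|
      = |‖∑ i : Fin N, B ε i.castSucc • w i‖
          - ‖∑ i : Fin N, B ε i.castSucc • (‖v i ε‖⁻¹ • v i ε)‖| := by rw [hS₀norm]
    _ ≤ ‖(∑ i : Fin N, B ε i.castSucc • w i)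
          - ∑ i : Fin N, B ε i.castSucc • (‖v i ε‖⁻¹ • v i ε)‖ := abs_norm_sub_norm_le _ _
    _ = ‖∑ i : Fin N, B ε i.castSucc • (w i - ‖v i ε‖⁻¹ • v i ε)‖ := by
        rw [← Finset.sum_sub_distrib]
        congr 1
        exact Finset.sum_congr rfl fun i _ => (smul_sub _ _ _).symm
    _ ≤ ∑ i : Fin N, ‖B ε i.castSucc • (w i - ‖v i ε‖⁻¹ • v i ε)‖ := norm_sum_le _ _
    _ ≤ ∑ i : Fin N, C * ‖w i - ‖v i ε‖⁻¹ • v i ε‖ := by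
        refine Finset.sum_le_sum fun i _ => ?_
        rw [norm_smul, Real.norm_eq_abs, abs_of_pos (hpos _)]
        exact mul_le_mul_of_nonneg_right (hBle _) (norm_nonneg _)
    _ = h ε := by simp only [hh]; rw [Finset.mul_sum]
end
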